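/- arXiv:2103.16395 — 2 statements merged into one kernel-verified Lean document; each statement's English description precedes it below -/
import Mathlib

section
/- Let ℓ, ε, n be positive integers and let A be an ℓ×ℓ matrix over F = ℝ or ℂ. Let ω₁ be the smallest singular value (the 2ℓεn-th largest singular value) of the 2ℓεn × (2ε+1)ℓn block matrix [[Aᵀ⊗I_{εn}, I_ℓ⊗E_ε⊗I_n],[I_ℓ⊗I_{εn}, I_ℓ⊗F_ε⊗I_n]]. Then ω₁ ≥ 1/(1 + 2ε·max(1, ‖A‖₂^ε)). -/
open Matrix
open scoped Kronecker

noncomputable section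

/-- The `k × (k+1)` matrix `E_k = [I_k 0]`. -/
def Ek (𝕜 : Type*) [RCLike 𝕜] (k : ℕ) : Matrix (Fin k) (Fin (k+1)) 𝕜 :=
  Matrix.of fun i j => if (j : ℕ) = (i : ℕ) then 1 else 0

/-- The `k × (k+1)` matrix `F_k = [0 I_k]`. -/
def Fk (𝕜 : Type*) [RCLike 𝕜] (k : ℕ) : Matrix (Fin k) (Fin (k+1)) 𝕜 :=
  Matrix.of fun i j => if (j : ℕ) = (i : ℕ) + 1 then 1 else 0

/-- The standard unit vector `(0, …, 0, 1)ᵀ` of size `k+1`. -/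
def evec (𝕜 : Type*) [RCLike 𝕜] (k : ℕ) : Fin (k+1) → 𝕜 :=
  fun i => if (i : ℕ) = k then 1 else 0

variable {𝕜 : Type*} [RCLike 𝕜]

/-- Frobenius norm of a matrix. -/
def frobNorm {p q : Type*} [Fintype p] [Fintype q] (M : Matrix p q 𝕜) : ℝ :=
  Real.sqrt (∑ i, ∑ j, ‖M i j‖ ^ 2)

/-- Spectral norm (largest singular value) of a matrix. -/
def specNorm {p q : Type*} [Fintype p] [Fintype q] [DecidableEq p] (M : Matrix p q 𝕜) : ℝ :=
  Real.sqrt (⨆ i, (Matrix.isHermitian_mul_conjTranspose_self M).eigenvalues i)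

/-- Smallest singular value of a `p × q` matrix with `p ≤ q`
(the `p`-th largest singular value). -/
def sigmaMin {p q : Type*} [Fintype p] [Fintype q] [DecidableEq p] (M : Matrix p q 𝕜) : ℝ :=
  Real.sqrt (⨅ i, (Matrix.isHermitian_mul_conjTranspose_self M).eigenvalues i)

/-- Euclidean norm of a vector. -/
def vecNorm {q : Type*} [Fintype q] (x : q → 𝕜) : ℝ :=
  Real.sqrt (∑ i, ‖x i‖ ^ 2)

/-- Frobenius norm of the pencil `P.1 - λ • P.2`. -/
def pFrob {p q : Type*} [Fintype p] [Fintype q] (P : Matrix p q 𝕜 × Matrix p q 𝕜) : ℝ :=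
  Real.sqrt (frobNorm P.1 ^ 2 + frobNorm P.2 ^ 2)

/-- Spectral norm of the pencil `P.1 - λ • P.2`. -/
def pSpec {p q : Type*} [Fintype p] [Fintype q] [DecidableEq p]
    (P : Matrix p q 𝕜 × Matrix p q 𝕜) : ℝ :=
  Real.sqrt (specNorm P.1 ^ 2 + specNorm P.2 ^ 2)

/-- A 3×3 block matrix. -/
def blocks3 {R1 R2 R3 C1 C2 C3 : Type*}
    (M11 : Matrix R1 C1 𝕜) (M12 : Matrix R1 C2 𝕜) (M13 : Matrix R1 C3 𝕜)
    (M21 : Matrix R2 C1 𝕜) (M22 : Matrix R2 C2 𝕜) (M23 : Matrix R2 C3 𝕜)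
    (M31 : Matrix R3 C1 𝕜) (M32 : Matrix R3 C2 𝕜) (M33 : Matrix R3 C3 𝕜) :
    Matrix (R1 ⊕ (R2 ⊕ R3)) (C1 ⊕ (C2 ⊕ C3)) 𝕜 :=
  Matrix.fromBlocks M11 (Matrix.fromCols M12 M13) (Matrix.fromRows M21 M31)
    (Matrix.fromBlocks M22 M23 M32 M33)

/-- `K̂₂ᵀ C = (e_{η+1} ⊗ I_m) C`. -/
def colUnit {m ℓ : ℕ} (η : ℕ) (C : Matrix (Fin m) (Fin ℓ) 𝕜) :
    Matrix (Fin (η+1) × Fin m) (Fin ℓ) 𝕜 :=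
  Matrix.of fun i j => evec 𝕜 η i.1 * C i.2 j

/-- `B K̂₁ = B (e_{ε+1}ᵀ ⊗ I_n)`. -/
def rowUnit {n ℓ : ℕ} (ε : ℕ) (B : Matrix (Fin ℓ) (Fin n) 𝕜) :
    Matrix (Fin ℓ) (Fin (ε+1) × Fin n) 𝕜 :=
  Matrix.of fun i j => evec 𝕜 ε j.1 * B i j.2

/-- Row index type of a block Kronecker pencil. -/
abbrev SRow (m ℓ ε η n : ℕ) := (Fin (η+1) × Fin m) ⊕ (Fin ℓ ⊕ (Fin ε × Fin n))

/-- Column index type of a block Kronecker pencil. -/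
abbrev SCol (m ℓ ε η n : ℕ) := (Fin (ε+1) × Fin n) ⊕ (Fin ℓ ⊕ (Fin η × Fin m))

/-- The block Kronecker pencil
`S(λ) = [[M(λ), K̂₂ᵀC, K₂ᵀ(λ)], [BK̂₁, A-λI, 0], [K₁(λ), 0, 0]]`
represented as a pair `(Sa, Sb)` with `S(λ) = Sa - λ Sb`. -/
def blockKron (m n ℓ ε η : ℕ) (A : Matrix (Fin ℓ) (Fin ℓ) 𝕜) (B : Matrix (Fin ℓ) (Fin n) 𝕜)
    (C : Matrix (Fin m) (Fin ℓ) 𝕜)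
    (M : Matrix (Fin (η+1) × Fin m) (Fin (ε+1) × Fin n) 𝕜 ×
         Matrix (Fin (η+1) × Fin m) (Fin (ε+1) × Fin n) 𝕜) :
    Matrix (SRow m ℓ ε η n) (SCol m ℓ ε η n) 𝕜 × Matrix (SRow m ℓ ε η n) (SCol m ℓ ε η n) 𝕜 :=
  (blocks3 M.1 (colUnit η C) ((Ek 𝕜 η)ᵀ ⊗ₖ (1 : Matrix (Fin m) (Fin m) 𝕜))
      (rowUnit ε B) A 0
      (Ek 𝕜 ε ⊗ₖ (1 : Matrix (Fin n) (Fin n) 𝕜)) 0 0,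
   blocks3 M.2 0 ((Fk 𝕜 η)ᵀ ⊗ₖ (1 : Matrix (Fin m) (Fin m) 𝕜))
      0 1 0
      (Fk 𝕜 ε ⊗ₖ (1 : Matrix (Fin n) (Fin n) 𝕜)) 0 0)

/-- Row index type of the matrix `T`. -/
abbrev TRow (m ℓ ε η n : ℕ) :=
  (((Fin η × Fin m) × Fin ℓ) ⊕ ((Fin η × Fin m) × Fin ℓ)) ⊕
  (((Fin ℓ × (Fin ε × Fin n)) ⊕ (Fin ℓ × (Fin ε × Fin n))) ⊕
   (((Fin η × Fin m) × (Fin ε × Fin n)) ⊕ ((Fin η × Fin m) × (Fin ε × Fin n))))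

/-- Column index type of the matrix `T`. -/
abbrev TCol (m ℓ ε η n : ℕ) :=
  (((Fin (η+1) × Fin m) × Fin ℓ) ⊕ ((Fin η × Fin m) × Fin ℓ)) ⊕
  (((Fin ℓ × (Fin ε × Fin n)) ⊕ (Fin ℓ × (Fin (ε+1) × Fin n))) ⊕
   (((Fin (η+1) × Fin m) × (Fin ε × Fin n)) ⊕ ((Fin η × Fin m) × (Fin (ε+1) × Fin n))))

/-- The 6×6 block matrix `T`. -/
def Tmat (m n ℓ ε η : ℕ) (A : Matrix (Fin ℓ) (Fin ℓ) 𝕜) (B : Matrix (Fin ℓ) (Fin n) 𝕜)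
    (C : Matrix (Fin m) (Fin ℓ) 𝕜) : Matrix (TRow m ℓ ε η n) (TCol m ℓ ε η n) 𝕜 :=
  Matrix.fromRows
    (Matrix.fromCols
      (Matrix.fromBlocks
        ((Ek 𝕜 η ⊗ₖ (1 : Matrix (Fin m) (Fin m) 𝕜)) ⊗ₖ (1 : Matrix (Fin ℓ) (Fin ℓ) 𝕜))
        ((1 : Matrix (Fin η × Fin m) (Fin η × Fin m) 𝕜) ⊗ₖ A)
        ((Fk 𝕜 η ⊗ₖ (1 : Matrix (Fin m) (Fin m) 𝕜)) ⊗ₖ (1 : Matrix (Fin ℓ) (Fin ℓ) 𝕜))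
        ((1 : Matrix (Fin η × Fin m) (Fin η × Fin m) 𝕜) ⊗ₖ (1 : Matrix (Fin ℓ) (Fin ℓ) 𝕜)))
      (Matrix.fromCols 0
        (Matrix.fromBlocks 0
          ((1 : Matrix (Fin η × Fin m) (Fin η × Fin m) 𝕜) ⊗ₖ (rowUnit ε B))
          0 0)))
    (Matrix.fromRows
      (Matrix.fromCols 0
        (Matrix.fromCols
          (Matrix.fromBlocks
            (Aᵀ ⊗ₖ (1 : Matrix (Fin ε × Fin n) (Fin ε × Fin n) 𝕜))
            ((1 : Matrix (Fin ℓ) (Fin ℓ) 𝕜) ⊗ₖ (Ek 𝕜 ε ⊗ₖ (1 : Matrix (Fin n) (Fin n) 𝕜)))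
            ((1 : Matrix (Fin ℓ) (Fin ℓ) 𝕜) ⊗ₖ (1 : Matrix (Fin ε × Fin n) (Fin ε × Fin n) 𝕜))
            ((1 : Matrix (Fin ℓ) (Fin ℓ) 𝕜) ⊗ₖ (Fk 𝕜 ε ⊗ₖ (1 : Matrix (Fin n) (Fin n) 𝕜))))
          (Matrix.fromBlocks
            (Matrix.of fun (i : Fin ℓ × (Fin ε × Fin n))
                (j : (Fin (η+1) × Fin m) × (Fin ε × Fin n)) =>
              evec 𝕜 η j.1.1 * C j.1.2 i.1 * (if i.2 = j.2 then 1 else 0))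
            0 0 0)))
      (Matrix.fromCols 0
        (Matrix.fromCols 0
          (Matrix.fromBlocks
            ((Ek 𝕜 η ⊗ₖ (1 : Matrix (Fin m) (Fin m) 𝕜)) ⊗ₖ
              (1 : Matrix (Fin ε × Fin n) (Fin ε × Fin n) 𝕜))
            ((1 : Matrix (Fin η × Fin m) (Fin η × Fin m) 𝕜) ⊗ₖ
              (Ek 𝕜 ε ⊗ₖ (1 : Matrix (Fin n) (Fin n) 𝕜)))
            ((Fk 𝕜 η ⊗ₖ (1 : Matrix (Fin m) (Fin m) 𝕜)) ⊗ₖ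
              (1 : Matrix (Fin ε × Fin n) (Fin ε × Fin n) 𝕜))
            ((1 : Matrix (Fin η × Fin m) (Fin η × Fin m) 𝕜) ⊗ₖ
              (Fk 𝕜 ε ⊗ₖ (1 : Matrix (Fin n) (Fin n) 𝕜)))))))

/-- The 6×6 block matrix `ΔT` built from the blocks of the perturbation pencil. -/
def DeltaT (m n ℓ ε η : ℕ)
    (Δ12a Δ12b : Matrix (Fin (η+1) × Fin m) (Fin ℓ) 𝕜)
    (Δ13a Δ13b : Matrix (Fin (η+1) × Fin m) (Fin η × Fin m) 𝕜)
    (Δ21a Δ21b : Matrix (Fin ℓ) (Fin (ε+1) × Fin n) 𝕜)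
    (Δ22a Δ22b : Matrix (Fin ℓ) (Fin ℓ) 𝕜)
    (Δ23a Δ23b : Matrix (Fin ℓ) (Fin η × Fin m) 𝕜)
    (Δ31a Δ31b : Matrix (Fin ε × Fin n) (Fin (ε+1) × Fin n) 𝕜)
    (Δ32a Δ32b : Matrix (Fin ε × Fin n) (Fin ℓ) 𝕜) :
    Matrix (TRow m ℓ ε η n) (TCol m ℓ ε η n) 𝕜 :=
  Matrix.fromRows
    (Matrix.fromCols
      (Matrix.fromBlocks
        (Δ13aᵀ ⊗ₖ (1 : Matrix (Fin ℓ) (Fin ℓ) 𝕜))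
        ((1 : Matrix (Fin η × Fin m) (Fin η × Fin m) 𝕜) ⊗ₖ Δ22a)
        (Δ13bᵀ ⊗ₖ (1 : Matrix (Fin ℓ) (Fin ℓ) 𝕜))
        ((1 : Matrix (Fin η × Fin m) (Fin η × Fin m) 𝕜) ⊗ₖ Δ22b))
      (Matrix.fromCols 0
        (Matrix.fromBlocks 0 ((1 : Matrix (Fin η × Fin m) (Fin η × Fin m) 𝕜) ⊗ₖ Δ21a)
          0 ((1 : Matrix (Fin η × Fin m) (Fin η × Fin m) 𝕜) ⊗ₖ Δ21b))))
    (Matrix.fromRows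
      (Matrix.fromCols 0
        (Matrix.fromCols
          (Matrix.fromBlocks
            (Δ22aᵀ ⊗ₖ (1 : Matrix (Fin ε × Fin n) (Fin ε × Fin n) 𝕜))
            ((1 : Matrix (Fin ℓ) (Fin ℓ) 𝕜) ⊗ₖ Δ31a)
            (Δ22bᵀ ⊗ₖ (1 : Matrix (Fin ε × Fin n) (Fin ε × Fin n) 𝕜))
            ((1 : Matrix (Fin ℓ) (Fin ℓ) 𝕜) ⊗ₖ Δ31b))
          (Matrix.fromBlocks
            (Δ12aᵀ ⊗ₖ (1 : Matrix (Fin ε × Fin n) (Fin ε × Fin n) 𝕜)) 0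
            (Δ12bᵀ ⊗ₖ (1 : Matrix (Fin ε × Fin n) (Fin ε × Fin n) 𝕜)) 0)))
      (Matrix.fromCols
        (Matrix.fromBlocks 0 ((1 : Matrix (Fin η × Fin m) (Fin η × Fin m) 𝕜) ⊗ₖ Δ32a)
          0 ((1 : Matrix (Fin η × Fin m) (Fin η × Fin m) 𝕜) ⊗ₖ Δ32b))
        (Matrix.fromCols
          (Matrix.fromBlocks
            (Δ23aᵀ ⊗ₖ (1 : Matrix (Fin ε × Fin n) (Fin ε × Fin n) 𝕜)) 0
            (Δ23bᵀ ⊗ₖ (1 : Matrix (Fin ε × Fin n) (Fin ε × Fin n) 𝕜)) 0)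
          (Matrix.fromBlocks
            (Δ13aᵀ ⊗ₖ (1 : Matrix (Fin ε × Fin n) (Fin ε × Fin n) 𝕜))
            ((1 : Matrix (Fin η × Fin m) (Fin η × Fin m) 𝕜) ⊗ₖ Δ31a)
            (Δ13bᵀ ⊗ₖ (1 : Matrix (Fin ε × Fin n) (Fin ε × Fin n) 𝕜))
            ((1 : Matrix (Fin η × Fin m) (Fin η × Fin m) 𝕜) ⊗ₖ Δ31b)))))

/-- `(Λ_k(x) ⊗ I_m)` where `Λ_k(x) = (x^k, …, x, 1)ᵀ`. -/
def LamI (𝕜 : Type*) [RCLike 𝕜] (k m : ℕ) (x : 𝕜) :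
    Matrix (Fin (k+1) × Fin m) (Fin m) 𝕜 :=
  Matrix.of fun i j => if i.2 = j then x ^ (k - (i.1 : ℕ)) else 0

/-- `(A, B)` is controllable if the controllability matrix `[B, AB, …, A^{ℓ-1}B]`
has full rank `ℓ`. -/
def Controllable {ℓ n : ℕ} (A : Matrix (Fin ℓ) (Fin ℓ) 𝕜)
    (B : Matrix (Fin ℓ) (Fin n) 𝕜) : Prop :=
  (Matrix.of fun (i : Fin ℓ) (p : Fin ℓ × Fin n) => (A ^ (p.1 : ℕ) * B) i p.2).rank = ℓ

/-- `(A, C)` is observable if `(Aᵀ, Cᵀ)` is controllable. -/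
def Observable {ℓ m : ℕ} (A : Matrix (Fin ℓ) (Fin ℓ) 𝕜)
    (C : Matrix (Fin m) (Fin ℓ) 𝕜) : Prop :=
  Controllable Aᵀ Cᵀ

end


noncomputable section S0aux
open Matrix
open scoped Kronecker
namespace S0
variable {𝕜 : Type*} [RCLike 𝕜]
variable {ι κ : Type*} [Fintype ι] [Fintype κ]

def nsq {ι : Type*} [Fintype ι] (v : ι → 𝕜) : ℝ := ∑ i, ‖v i‖ ^ 2

def en {ι : Type*} [Fintype ι] (v : ι → 𝕜) : ℝ := Real.sqrt (nsq v)

variable {ι κ : Type*} [Fintype ι] [Fintype κ]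

lemma nsq_nonneg (v : ι → 𝕜) : 0 ≤ nsq v :=
  Finset.sum_nonneg fun _ _ => sq_nonneg _

lemma en_nonneg (v : ι → 𝕜) : 0 ≤ en v := Real.sqrt_nonneg _

lemma sq_en (v : ι → 𝕜) : en v ^ 2 = nsq v := Real.sq_sqrt (nsq_nonneg v)

lemma en_eq_norm (v : ι → 𝕜) : en v = ‖(WithLp.equiv 2 (ι → 𝕜)).symm v‖ := by
  rw [EuclideanSpace.norm_eq]; rfl

lemma en_add_le (v w : ι → 𝕜) : en (v + w) ≤ en v + en w := by
  rw [en_eq_norm, en_eq_norm, en_eq_norm]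
  simpa using norm_add_le ((WithLp.equiv 2 (ι → 𝕜)).symm v) ((WithLp.equiv 2 (ι → 𝕜)).symm w)

lemma en_le_of_nsq_le {v : ι → 𝕜} {w : κ → 𝕜} {c : ℝ} (hc : 0 ≤ c)
    (h : nsq v ≤ c ^ 2 * nsq w) : en v ≤ c * en w := by
  have := Real.sqrt_le_sqrt h
  rwa [Real.sqrt_mul (by positivity), Real.sqrt_sq hc] at this

lemma nsq_le_of_en_le {v : ι → 𝕜} {w : κ → 𝕜} {c : ℝ} (hc : 0 ≤ c)
    (h : en v ≤ c * en w) : nsq v ≤ c ^ 2 * nsq w := by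
  rw [← sq_en v, ← sq_en w]
  calc en v ^ 2 ≤ (c * en w) ^ 2 := by
        apply pow_le_pow_left₀ (en_nonneg v) h
      _ = c ^ 2 * en w ^ 2 := by ring

lemma nsq_sum_type (v : ι ⊕ κ → 𝕜) :
    nsq v = nsq (v ∘ Sum.inl) + nsq (v ∘ Sum.inr) := by
  simp [nsq, Fintype.sum_sum_type, Function.comp]

/-- Rayleigh identity. -/
lemma rayleigh_eq_nsq {p q : Type*} [Fintype p] [Fintype q] (M : Matrix p q 𝕜) (x : p → 𝕜) :
    RCLike.re (dotProduct (star x) ((M * Mᴴ) *ᵥ x)) = nsq (Mᴴ *ᵥ x) := by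
  have h1 : star x ᵥ* M = star (Mᴴ *ᵥ x) := by
    rw [Matrix.star_mulVec, Matrix.conjTranspose_conjTranspose]
  rw [← Matrix.mulVec_mulVec, dotProduct_mulVec, h1]
  have : dotProduct (star (Mᴴ *ᵥ x)) (Mᴴ *ᵥ x)
      = ∑ j, ((‖(Mᴴ *ᵥ x) j‖ : 𝕜) ^ 2) := by
    simp [dotProduct, RCLike.star_def, RCLike.conj_mul]
  rw [this]
  rw [map_sum]
  simp [nsq]


lemma dot_self_re (v : ι → 𝕜) : RCLike.re (dotProduct (star v) v) = nsq v := by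
  have : dotProduct (star v) v = ∑ j, ((‖v j‖ : 𝕜) ^ 2) := by
    simp [dotProduct, RCLike.star_def, RCLike.conj_mul]
  rw [this, map_sum]
  simp [nsq]

lemma re_dot_le (v w : ι → 𝕜) : RCLike.re (dotProduct (star v) w) ≤ en v * en w := by
  have h := EuclideanSpace.inner_eq_star_dotProduct
    ((WithLp.equiv 2 (ι → 𝕜)).symm v) ((WithLp.equiv 2 (ι → 𝕜)).symm w)
  have h2 : (inner 𝕜 ((WithLp.equiv 2 (ι → 𝕜)).symm v) ((WithLp.equiv 2 (ι → 𝕜)).symm w) : 𝕜)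
      = dotProduct (star v) w := h.trans (dotProduct_comm _ _)
  calc RCLike.re (dotProduct (star v) w)
      ≤ ‖dotProduct (star v) w‖ := RCLike.re_le_norm _
    _ = ‖(inner 𝕜 ((WithLp.equiv 2 (ι → 𝕜)).symm v) ((WithLp.equiv 2 (ι → 𝕜)).symm w) : 𝕜)‖ := by
        rw [h2]
    _ ≤ _ := by rw [en_eq_norm, en_eq_norm]; exact norm_inner_le_norm _ _

/-- Rayleigh sup bound for a hermitian matrix. -/
lemma rayleigh_le_sup {p : Type*} [Fintype p] [DecidableEq p] [Nonempty p]
    {P : Matrix p p 𝕜} (hP : P.IsHermitian) (x : p → 𝕜) :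
    RCLike.re (dotProduct (star x) (P *ᵥ x)) ≤ (⨆ i, hP.eigenvalues i) * nsq x := by
  set U : Matrix p p 𝕜 := (hP.eigenvectorUnitary : Matrix p p 𝕜) with hU
  set y : p → 𝕜 := Uᴴ *ᵥ x with hy
  have hsx : star x ᵥ* U = star y := by
    rw [hy, Matrix.star_mulVec, Matrix.conjTranspose_conjTranspose]
  have key : dotProduct (star x) (P *ᵥ x)
      = dotProduct (star y) ((Matrix.diagonal (RCLike.ofReal ∘ hP.eigenvalues)) *ᵥ y) := by
    conv_lhs => rw [hP.spectral_theorem, Unitary.conjStarAlgAut_apply]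
    rw [Matrix.star_eq_conjTranspose, ← Matrix.mulVec_mulVec, ← Matrix.mulVec_mulVec,
      dotProduct_mulVec (star x) U, hsx, ← hU]
  have hyx : nsq y = nsq x := by
    have : dotProduct (star y) y = dotProduct (star x) x := by
      rw [hy, dotProduct_mulVec (star y), hy, Matrix.star_mulVec,
        Matrix.conjTranspose_conjTranspose]
      rw [Matrix.vecMul_vecMul]
      have hUU : U * Uᴴ = 1 := by
        have := (Matrix.mem_unitaryGroup_iff).mp hP.eigenvectorUnitary.2
        rwa [Matrix.star_eq_conjTranspose] at this
      rw [hUU, Matrix.vecMul_one]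
    rw [← dot_self_re, ← dot_self_re, this]
  have hdiag : RCLike.re (dotProduct (star y)
      ((Matrix.diagonal (RCLike.ofReal ∘ hP.eigenvalues)) *ᵥ y))
      = ∑ i, hP.eigenvalues i * ‖y i‖ ^ 2 := by
    rw [dotProduct]
    rw [map_sum]
    congr 1; funext i
    rw [Matrix.mulVec_diagonal]
    have : star (y i) * (((hP.eigenvalues i : ℝ) : 𝕜) * y i)
        = ((hP.eigenvalues i * ‖y i‖ ^ 2 : ℝ) : 𝕜) := by
      rw [mul_comm (((hP.eigenvalues i : ℝ) : 𝕜)) (y i), ← mul_assoc]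
      rw [RCLike.star_def, RCLike.conj_mul]
      push_cast
      ring
    rw [Pi.star_apply, Function.comp_apply, this, RCLike.ofReal_re]
  have hbdd : BddAbove (Set.range hP.eigenvalues) := Set.Finite.bddAbove (Set.finite_range _)
  have hsum : ∑ i, hP.eigenvalues i * ‖y i‖ ^ 2 ≤ (⨆ i, hP.eigenvalues i) * nsq y := by
    rw [nsq, Finset.mul_sum]
    apply Finset.sum_le_sum
    intro i _
    exact mul_le_mul_of_nonneg_right (le_ciSup hbdd i) (sq_nonneg _)
  rw [key, hdiag]
  rw [hyx] at hsum
  exact hsum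



lemma sum_fin_val {M : Type*} [AddCommMonoid M] {k m : ℕ} (hm : m < k) (f : Fin k → M) :
    ∑ b : Fin k, (if (b : ℕ) = m then f b else 0) = f ⟨m, hm⟩ := by
  rw [Finset.sum_eq_single (⟨m, hm⟩ : Fin k)]
  · simp
  · intro b _ hb
    rw [if_neg]
    intro hbv
    exact hb (Fin.ext hbv)
  · intro hb; exact absurd (Finset.mem_univ _) hb

variable (𝕜) in
/-- shift matrix: `(Sd d) j i = [j + d = i]`. -/
def Sd (ε d : ℕ) : Matrix (Fin (ε+1)) (Fin ε) 𝕜 :=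
  Matrix.of fun j i => if (j : ℕ) + d = (i : ℕ) then 1 else 0

variable (𝕜) in
/-- shifted identity: `(Td k) i i' = [i + k = i']`. -/
def Td (ε k : ℕ) : Matrix (Fin ε) (Fin ε) 𝕜 :=
  Matrix.of fun i i' => if (i : ℕ) + k = (i' : ℕ) then 1 else 0

lemma E_mul_Sd (ε d : ℕ) : Ek 𝕜 ε * Sd 𝕜 ε d = Td 𝕜 ε d := by
  ext i i'
  rw [Matrix.mul_apply]
  have : ∀ j : Fin (ε+1), Ek 𝕜 ε i j * Sd 𝕜 ε d j i'
      = if (j : ℕ) = (i : ℕ) then (if (j : ℕ) + d = (i' : ℕ) then (1:𝕜) else 0) else 0 := by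
    intro j
    simp only [Ek, Sd, Matrix.of_apply, ite_mul, one_mul, zero_mul]
  rw [Finset.sum_congr rfl fun j _ => this j,
    sum_fin_val (Nat.lt_succ_of_lt i.isLt) _]
  rfl

lemma F_mul_Sd (ε d : ℕ) : Fk 𝕜 ε * Sd 𝕜 ε d = Td 𝕜 ε (d+1) := by
  ext i i'
  rw [Matrix.mul_apply]
  have : ∀ j : Fin (ε+1), Fk 𝕜 ε i j * Sd 𝕜 ε d j i'
      = if (j : ℕ) = (i : ℕ) + 1 then (if (j : ℕ) + d = (i' : ℕ) then (1:𝕜) else 0) else 0 := by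
    intro j
    simp only [Fk, Sd, Matrix.of_apply, ite_mul, one_mul, zero_mul]
  rw [Finset.sum_congr rfl fun j _ => this j,
    sum_fin_val (Nat.succ_lt_succ i.isLt) _]
  simp only [Td, Matrix.of_apply]
  apply if_congr _ rfl rfl
  constructor <;> (intro h; omega)

lemma Td_zero (ε : ℕ) : Td 𝕜 ε 0 = 1 := by
  ext i i'
  simp only [Td, Matrix.of_apply, Matrix.one_apply, add_zero]
  by_cases h : i = i'
  · simp [h]
  · rw [if_neg, if_neg h]
    intro hv
    exact h (Fin.ext hv)

lemma Td_all (ε : ℕ) : Td 𝕜 ε ε = 0 := by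
  ext i i'
  simp only [Td, Matrix.of_apply, Matrix.zero_apply]
  rw [if_neg]
  have := i'.isLt
  omega

variable (ℓ ε n : ℕ) (A : Matrix (Fin ℓ) (Fin ℓ) 𝕜)

/-- blocks of the matrix in the statement -/
def M11 : Matrix (Fin ℓ × (Fin ε × Fin n)) (Fin ℓ × (Fin ε × Fin n)) 𝕜 :=
  Aᵀ ⊗ₖ (1 : Matrix (Fin ε × Fin n) (Fin ε × Fin n) 𝕜)
def M12 : Matrix (Fin ℓ × (Fin ε × Fin n)) (Fin ℓ × (Fin (ε+1) × Fin n)) 𝕜 :=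
  (1 : Matrix (Fin ℓ) (Fin ℓ) 𝕜) ⊗ₖ (Ek 𝕜 ε ⊗ₖ (1 : Matrix (Fin n) (Fin n) 𝕜))
def M22 : Matrix (Fin ℓ × (Fin ε × Fin n)) (Fin ℓ × (Fin (ε+1) × Fin n)) 𝕜 :=
  (1 : Matrix (Fin ℓ) (Fin ℓ) 𝕜) ⊗ₖ (Fk 𝕜 ε ⊗ₖ (1 : Matrix (Fin n) (Fin n) 𝕜))

def Hd (d : ℕ) : Matrix (Fin ℓ × (Fin (ε+1) × Fin n)) (Fin ℓ × (Fin ε × Fin n)) 𝕜 :=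
  ((Aᵀ) ^ d) ⊗ₖ (Sd 𝕜 ε d ⊗ₖ (1 : Matrix (Fin n) (Fin n) 𝕜))

def Hs : Matrix (Fin ℓ × (Fin (ε+1) × Fin n)) (Fin ℓ × (Fin ε × Fin n)) 𝕜 :=
  ∑ d ∈ Finset.range ε, Hd ℓ ε n A d

def Gm : Matrix (Fin ℓ × (Fin ε × Fin n)) (Fin ℓ × (Fin (ε+1) × Fin n)) 𝕜 :=
  M12 ℓ ε n (𝕜 := 𝕜) - M11 ℓ ε n A * M22 ℓ ε n (𝕜 := 𝕜)

lemma G_mul_H : Gm ℓ ε n A * Hs ℓ ε n A = 1 := by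
  have key : ∀ d : ℕ, Gm ℓ ε n A * Hd ℓ ε n A d
      = ((Aᵀ) ^ d) ⊗ₖ (Td 𝕜 ε d ⊗ₖ (1 : Matrix (Fin n) (Fin n) 𝕜))
        - ((Aᵀ) ^ (d+1)) ⊗ₖ (Td 𝕜 ε (d+1) ⊗ₖ (1 : Matrix (Fin n) (Fin n) 𝕜)) := by
    intro d
    have h2 : M11 ℓ ε n A * M22 ℓ ε n (𝕜 := 𝕜)
        = Aᵀ ⊗ₖ (Fk 𝕜 ε ⊗ₖ (1 : Matrix (Fin n) (Fin n) 𝕜)) := by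
      rw [M11, M22, ← Matrix.mul_kronecker_mul, Matrix.mul_one, Matrix.one_mul]
    have h3 : M12 ℓ ε n (𝕜 := 𝕜) * Hd ℓ ε n A d
        = ((Aᵀ) ^ d) ⊗ₖ (Td 𝕜 ε d ⊗ₖ (1 : Matrix (Fin n) (Fin n) 𝕜)) := by
      rw [M12, Hd, ← Matrix.mul_kronecker_mul, ← Matrix.mul_kronecker_mul, E_mul_Sd,
        Matrix.one_mul, Matrix.one_mul]
    have h4 : (Aᵀ ⊗ₖ (Fk 𝕜 ε ⊗ₖ (1 : Matrix (Fin n) (Fin n) 𝕜))) * Hd ℓ ε n A d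
        = ((Aᵀ) ^ (d+1)) ⊗ₖ (Td 𝕜 ε (d+1) ⊗ₖ (1 : Matrix (Fin n) (Fin n) 𝕜)) := by
      rw [Hd, ← Matrix.mul_kronecker_mul, ← Matrix.mul_kronecker_mul, F_mul_Sd,
        Matrix.one_mul, ← pow_succ']
    rw [Gm, Matrix.sub_mul, h3, h2, h4]
  rw [Hs, Matrix.mul_sum]
  rw [Finset.sum_congr rfl fun d _ => key d, Finset.sum_range_sub']
  rw [Td_all, pow_zero, Td_zero, Matrix.one_kronecker_one, Matrix.one_kronecker_one,
    Matrix.zero_kronecker, Matrix.kronecker_zero, sub_zero]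

lemma Gm_def : Gm ℓ ε n A = M12 ℓ ε n (𝕜 := 𝕜) - M11 ℓ ε n A * M22 ℓ ε n (𝕜 := 𝕜) := rfl

/-- the right inverse of the statement's block matrix -/
def Wm : Matrix ((Fin ℓ × (Fin ε × Fin n)) ⊕ (Fin ℓ × (Fin (ε+1) × Fin n)))
    ((Fin ℓ × (Fin ε × Fin n)) ⊕ (Fin ℓ × (Fin ε × Fin n))) 𝕜 :=
  Matrix.fromBlocks (-(M22 ℓ ε n (𝕜 := 𝕜) * Hs ℓ ε n A)) (1 + M22 ℓ ε n (𝕜 := 𝕜) * (Hs ℓ ε n A * M11 ℓ ε n A))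
    (Hs ℓ ε n A) (-(Hs ℓ ε n A * M11 ℓ ε n A))

def Mm : Matrix ((Fin ℓ × (Fin ε × Fin n)) ⊕ (Fin ℓ × (Fin ε × Fin n)))
    ((Fin ℓ × (Fin ε × Fin n)) ⊕ (Fin ℓ × (Fin (ε+1) × Fin n))) 𝕜 :=
  Matrix.fromBlocks (M11 ℓ ε n A) (M12 ℓ ε n (𝕜 := 𝕜))
    ((1 : Matrix (Fin ℓ) (Fin ℓ) 𝕜) ⊗ₖ (1 : Matrix (Fin ε × Fin n) (Fin ε × Fin n) 𝕜))
    (M22 ℓ ε n (𝕜 := 𝕜))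

lemma M_mul_W : Mm ℓ ε n A * Wm ℓ ε n A = 1 := by
  have hG := G_mul_H ℓ ε n A
  have e1 : Gm ℓ ε n A * (Hs ℓ ε n A * M11 ℓ ε n A) = M11 ℓ ε n A := by
    rw [← Matrix.mul_assoc, hG, Matrix.one_mul]
  rw [Gm_def, Matrix.sub_mul] at e1
  rw [Mm, Wm, Matrix.fromBlocks_multiply]
  have b11 : M11 ℓ ε n A * -(M22 ℓ ε n (𝕜 := 𝕜) * Hs ℓ ε n A) + M12 ℓ ε n (𝕜 := 𝕜) * Hs ℓ ε n A = 1 := by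
    rw [Matrix.mul_neg, ← Matrix.mul_assoc, neg_add_eq_sub, ← Matrix.sub_mul, ← Gm_def, hG]
  have b12 : M11 ℓ ε n A * (1 + M22 ℓ ε n (𝕜 := 𝕜) * (Hs ℓ ε n A * M11 ℓ ε n A))
      + M12 ℓ ε n (𝕜 := 𝕜) * -(Hs ℓ ε n A * M11 ℓ ε n A) = 0 := by
    rw [Matrix.mul_add, Matrix.mul_one, Matrix.mul_neg, ← Matrix.mul_assoc]
    have := e1
    abel_nf
    abel_nf at this
    linear_combination (norm := abel_nf) -this
  have b21 : ((1 : Matrix (Fin ℓ) (Fin ℓ) 𝕜) ⊗ₖ (1 : Matrix (Fin ε × Fin n) (Fin ε × Fin n) 𝕜))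
      * -(M22 ℓ ε n (𝕜 := 𝕜) * Hs ℓ ε n A) + M22 ℓ ε n (𝕜 := 𝕜) * Hs ℓ ε n A = 0 := by
    rw [Matrix.one_kronecker_one, Matrix.one_mul]
    exact neg_add_cancel _
  have b22 : ((1 : Matrix (Fin ℓ) (Fin ℓ) 𝕜) ⊗ₖ (1 : Matrix (Fin ε × Fin n) (Fin ε × Fin n) 𝕜))
      * (1 + M22 ℓ ε n (𝕜 := 𝕜) * (Hs ℓ ε n A * M11 ℓ ε n A))
      + M22 ℓ ε n (𝕜 := 𝕜) * -(Hs ℓ ε n A * M11 ℓ ε n A) = 1 := by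
    rw [Matrix.one_kronecker_one, Matrix.one_mul, Matrix.mul_neg]
    abel
  rw [b11, b12, b21, b22, Matrix.fromBlocks_one]

/-- `mulVec` of a nested Kronecker product -/
lemma kron_mulVec {a b : ℕ} (X : Matrix (Fin ℓ) (Fin ℓ) 𝕜) (Y : Matrix (Fin a) (Fin b) 𝕜)
    (v : Fin ℓ × (Fin b × Fin n) → 𝕜) (i₁ : Fin ℓ) (i₂ : Fin a) (i₃ : Fin n) :
    ((X ⊗ₖ (Y ⊗ₖ (1 : Matrix (Fin n) (Fin n) 𝕜))) *ᵥ v) (i₁, (i₂, i₃))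
      = ∑ x₂ : Fin b, Y i₂ x₂ * (X *ᵥ fun x₁ => v (x₁, (x₂, i₃))) i₁ := by
  have lhs : ((X ⊗ₖ (Y ⊗ₖ (1 : Matrix (Fin n) (Fin n) 𝕜))) *ᵥ v) (i₁, (i₂, i₃))
      = ∑ x₁ : Fin ℓ, ∑ x₂ : Fin b, ∑ x₃ : Fin n,
          X i₁ x₁ * (Y i₂ x₂ * (if i₃ = x₃ then 1 else 0)) * v (x₁, (x₂, x₃)) := by
    rw [Matrix.mulVec, dotProduct, Fintype.sum_prod_type]
    refine Finset.sum_congr rfl fun x₁ _ => ?_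
    rw [Fintype.sum_prod_type]
    refine Finset.sum_congr rfl fun x₂ _ => Finset.sum_congr rfl fun x₃ _ => ?_
    simp [Matrix.kroneckerMap_apply, Matrix.one_apply]
  rw [lhs, Finset.sum_comm]
  refine Finset.sum_congr rfl fun x₂ _ => ?_
  rw [Matrix.mulVec, dotProduct, Finset.mul_sum]
  refine Finset.sum_congr rfl fun x₁ _ => ?_
  calc ∑ x₃ : Fin n, X i₁ x₁ * (Y i₂ x₂ * if i₃ = x₃ then 1 else 0) * v (x₁, (x₂, x₃))
      = ∑ x₃ : Fin n, (if i₃ = x₃ then X i₁ x₁ * Y i₂ x₂ * v (x₁, (x₂, x₃)) else 0) := by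
        refine Finset.sum_congr rfl fun x₃ _ => ?_
        by_cases h : i₃ = x₃ <;> simp [h] <;> ring
    _ = X i₁ x₁ * Y i₂ x₂ * v (x₁, (x₂, i₃)) := by rw [Finset.sum_ite_eq]; simp
    _ = Y i₂ x₂ * (X i₁ x₁ * v (x₁, (x₂, i₃))) := by ring

lemma ite_delta_comm {α : Type*} [DecidableEq α] (a b : α) :
    (if a = b then (1:𝕜) else 0) = if b = a then 1 else 0 := by
  by_cases h : a = b
  · simp [h]
  · simp [h, Ne.symm h]

lemma star_delta (P : Prop) [Decidable P] : star (if P then (1:𝕜) else 0) = if P then 1 else 0 := by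
  split_ifs <;> simp

lemma star_pow_transpose (d : ℕ) (x₁ i₁ : Fin ℓ) :
    star (((Aᵀ) ^ d) x₁ i₁) = ((A.map (starRingEnd 𝕜)) ^ d) i₁ x₁ := by
  have hmap : (A.map (starRingEnd 𝕜)) ^ d = (A ^ d).map (starRingEnd 𝕜) := by
    rw [← RingHom.mapMatrix_apply, ← RingHom.mapMatrix_apply, ← map_pow]
  rw [← Matrix.transpose_pow, Matrix.transpose_apply, hmap, Matrix.map_apply]
  rfl

lemma Hd_conjT (d : ℕ) : (Hd ℓ ε n A d)ᴴ
    = ((A.map (starRingEnd 𝕜)) ^ d) ⊗ₖ ((Sd 𝕜 ε d)ᵀ ⊗ₖ (1 : Matrix (Fin n) (Fin n) 𝕜)) := by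
  ext i x
  rw [Matrix.conjTranspose_apply, Hd]
  simp only [Matrix.kroneckerMap_apply, Sd, Matrix.of_apply, Matrix.one_apply,
    star_mul', star_delta, star_one, star_zero, Matrix.transpose_apply]
  rw [star_pow_transpose, ite_delta_comm x.2.2 i.2.2]

lemma M22_conjT : (M22 ℓ ε n (𝕜 := 𝕜))ᴴ
    = (1 : Matrix (Fin ℓ) (Fin ℓ) 𝕜) ⊗ₖ ((Fk 𝕜 ε)ᵀ ⊗ₖ (1 : Matrix (Fin n) (Fin n) 𝕜)) := by
  ext i x
  rw [Matrix.conjTranspose_apply, M22]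
  simp only [Matrix.kroneckerMap_apply, Fk, Matrix.of_apply, Matrix.one_apply,
    star_mul', star_delta, star_one, star_zero, Matrix.transpose_apply]
  rw [ite_delta_comm x.1 i.1, ite_delta_comm x.2.2 i.2.2]

lemma M11_conjT : (M11 ℓ ε n A)ᴴ
    = (A.map (starRingEnd 𝕜)) ⊗ₖ ((1 : Matrix (Fin ε) (Fin ε) 𝕜) ⊗ₖ (1 : Matrix (Fin n) (Fin n) 𝕜)) := by
  ext i x
  rw [Matrix.conjTranspose_apply, M11]
  simp only [Matrix.kroneckerMap_apply, Matrix.one_apply, star_mul', star_delta, star_one,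
    star_zero, Matrix.transpose_apply]
  have h1 : star (A i.1 x.1) = A.map (starRingEnd 𝕜) i.1 x.1 := rfl
  rw [h1]
  have h2 : (if x.2 = i.2 then (1:𝕜) else 0)
      = (if i.2.1 = x.2.1 then (1:𝕜) else 0) * (if i.2.2 = x.2.2 then 1 else 0) := by
    obtain ⟨x1, x2, x3⟩ := x
    obtain ⟨i1, i2, i3⟩ := i
    simp only [Prod.ext_iff]
    by_cases ha : i2 = x2 <;> by_cases hb : i3 = x3
    · simp [ha, hb]
    · have hb' : ¬ x3 = i3 := fun h => hb h.symm
      simp [ha, hb, hb']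
    · have ha' : ¬ x2 = i2 := fun h => ha h.symm
      simp [ha, hb, ha']
    · have ha' : ¬ x2 = i2 := fun h => ha h.symm
      simp [ha, hb, ha']
  rw [h2]

lemma Hd_apply_form (d : ℕ) (v : Fin ℓ × (Fin (ε+1) × Fin n) → 𝕜) :
    (Hd ℓ ε n A d)ᴴ *ᵥ v = fun it : Fin ℓ × (Fin ε × Fin n) =>
      (if h : d ≤ (it.2.1 : ℕ) then
          some ((⟨(it.2.1 : ℕ) - d, by omega⟩ : Fin (ε+1)), it.2.2) else none).elim 0
        (fun t' => (((A.map (starRingEnd 𝕜)) ^ d) *ᵥ fun j => v (j, t')) it.1) := by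
  funext it
  obtain ⟨i₁, i₂, i₃⟩ := it
  rw [Hd_conjT, kron_mulVec]
  by_cases h : d ≤ (i₂ : ℕ)
  · rw [dif_pos h]
    have step : ∀ x₂ : Fin (ε+1), (Sd 𝕜 ε d)ᵀ i₂ x₂
          * (((A.map (starRingEnd 𝕜)) ^ d) *ᵥ fun j => v (j, (x₂, i₃))) i₁
        = if (x₂ : ℕ) = (i₂ : ℕ) - d then
            (((A.map (starRingEnd 𝕜)) ^ d) *ᵥ fun j => v (j, (x₂, i₃))) i₁ else 0 := by
      intro x₂
      rw [Matrix.transpose_apply, Sd, Matrix.of_apply]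
      by_cases hx : (x₂ : ℕ) + d = (i₂ : ℕ)
      · rw [if_pos hx, if_pos (by omega), one_mul]
      · rw [if_neg hx, if_neg (by omega), zero_mul]
    rw [Finset.sum_congr rfl fun x₂ _ => step x₂, sum_fin_val (by omega)]
    rfl
  · rw [dif_neg h]
    apply Finset.sum_eq_zero
    intro x₂ _
    rw [Matrix.transpose_apply, Sd, Matrix.of_apply, if_neg (by omega), zero_mul]

lemma M22_apply_form (z : Fin ℓ × (Fin ε × Fin n) → 𝕜) :
    (M22 ℓ ε n (𝕜 := 𝕜))ᴴ *ᵥ z = fun it : Fin ℓ × (Fin (ε+1) × Fin n) =>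
      (if h : 1 ≤ (it.2.1 : ℕ) then
          some ((⟨(it.2.1 : ℕ) - 1, by omega⟩ : Fin ε), it.2.2) else none).elim 0
        (fun t' => ((1 : Matrix (Fin ℓ) (Fin ℓ) 𝕜) *ᵥ fun j => z (j, t')) it.1) := by
  funext it
  obtain ⟨i₁, i₂, i₃⟩ := it
  rw [M22_conjT, kron_mulVec]
  by_cases h : 1 ≤ (i₂ : ℕ)
  · rw [dif_pos h]
    have step : ∀ x₂ : Fin ε, (Fk 𝕜 ε)ᵀ i₂ x₂
          * (((1 : Matrix (Fin ℓ) (Fin ℓ) 𝕜)) *ᵥ fun j => z (j, (x₂, i₃))) i₁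
        = if (x₂ : ℕ) = (i₂ : ℕ) - 1 then
            (((1 : Matrix (Fin ℓ) (Fin ℓ) 𝕜)) *ᵥ fun j => z (j, (x₂, i₃))) i₁ else 0 := by
      intro x₂
      rw [Matrix.transpose_apply, Fk, Matrix.of_apply]
      by_cases hx : (i₂ : ℕ) = (x₂ : ℕ) + 1
      · rw [if_pos hx, if_pos (by omega), one_mul]
      · rw [if_neg hx, if_neg (by omega), zero_mul]
    rw [Finset.sum_congr rfl fun x₂ _ => step x₂, sum_fin_val (by omega)]
    rfl
  · rw [dif_neg h]
    apply Finset.sum_eq_zero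
    intro x₂ _
    rw [Matrix.transpose_apply, Fk, Matrix.of_apply, if_neg (by omega), zero_mul]

lemma M11_apply_form (w : Fin ℓ × (Fin ε × Fin n) → 𝕜) :
    (M11 ℓ ε n A)ᴴ *ᵥ w = fun it : Fin ℓ × (Fin ε × Fin n) =>
      (some it.2).elim 0
        (fun t' => ((A.map (starRingEnd 𝕜)) *ᵥ fun j => w (j, t')) it.1) := by
  funext it
  obtain ⟨i₁, i₂, i₃⟩ := it
  rw [M11_conjT]
  have : ((A.map (starRingEnd 𝕜)) ⊗ₖ ((1 : Matrix (Fin ε) (Fin ε) 𝕜) ⊗ₖ (1 : Matrix (Fin n) (Fin n) 𝕜))) *ᵥ w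
      = ((A.map (starRingEnd 𝕜)) ⊗ₖ (1 : Matrix (Fin ε × Fin n) (Fin ε × Fin n) 𝕜)) *ᵥ w := by
    rw [Matrix.one_kronecker_one]
  rw [kron_mulVec]
  have step : ∀ x₂ : Fin ε, (1 : Matrix (Fin ε) (Fin ε) 𝕜) i₂ x₂
        * ((A.map (starRingEnd 𝕜)) *ᵥ fun j => w (j, (x₂, i₃))) i₁
      = if i₂ = x₂ then ((A.map (starRingEnd 𝕜)) *ᵥ fun j => w (j, (x₂, i₃))) i₁ else 0 := by
    intro x₂
    rw [Matrix.one_apply, ite_mul, one_mul, zero_mul]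
  rw [Finset.sum_congr rfl fun x₂ _ => step x₂, Finset.sum_ite_eq]
  simp


lemma specNorm_nonneg {p q : Type*} [Fintype p] [Fintype q] [DecidableEq p]
    (M : Matrix p q 𝕜) : 0 ≤ specNorm M := Real.sqrt_nonneg _

lemma eig_eq_nsq {p q : Type*} [Fintype p] [Fintype q] [DecidableEq p]
    (M : Matrix p q 𝕜) (i : p) :
    (Matrix.isHermitian_mul_conjTranspose_self M).eigenvalues i
      = nsq (Mᴴ *ᵥ ⇑((Matrix.isHermitian_mul_conjTranspose_self M).eigenvectorBasis i)) := by
  rw [(Matrix.isHermitian_mul_conjTranspose_self M).eigenvalues_eq i, rayleigh_eq_nsq]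

lemma nsq_eigenvector {p : Type*} [Fintype p] [DecidableEq p]
    {P : Matrix p p 𝕜} (hP : P.IsHermitian) (i : p) :
    nsq (⇑(hP.eigenvectorBasis i) : p → 𝕜) = 1 := by
  have h : ‖hP.eigenvectorBasis i‖ = 1 := hP.eigenvectorBasis.orthonormal.1 i
  have h2 := EuclideanSpace.norm_eq (hP.eigenvectorBasis i)
  rw [h, eq_comm, Real.sqrt_eq_one] at h2
  exact h2

lemma sq_specNorm {p q : Type*} [Fintype p] [Fintype q] [DecidableEq p] [Nonempty p]
    (M : Matrix p q 𝕜) :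
    specNorm M ^ 2 = ⨆ i, (Matrix.isHermitian_mul_conjTranspose_self M).eigenvalues i := by
  apply Real.sq_sqrt
  obtain ⟨i⟩ := ‹Nonempty p›
  calc (0:ℝ) ≤ (Matrix.isHermitian_mul_conjTranspose_self M).eigenvalues i := by
        rw [eig_eq_nsq]; exact nsq_nonneg _
    _ ≤ _ := le_ciSup (Set.Finite.bddAbove (Set.finite_range _)) i

lemma opBound_conjTranspose {p q : Type*} [Fintype p] [Fintype q] [DecidableEq p] [Nonempty p]
    (M : Matrix p q 𝕜) (x : p → 𝕜) : en (Mᴴ *ᵥ x) ≤ specNorm M * en x := by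
  apply en_le_of_nsq_le (specNorm_nonneg M)
  rw [sq_specNorm]
  rw [← rayleigh_eq_nsq]
  exact rayleigh_le_sup _ x

lemma opBound_flip {p : Type*} [Fintype p] [DecidableEq p] {B : Matrix p p 𝕜} {c : ℝ}
    (hc : 0 ≤ c) (hB : ∀ x, en (Bᴴ *ᵥ x) ≤ c * en x) (x : p → 𝕜) :
    en (B *ᵥ x) ≤ c * en x := by
  have h1 : nsq (B *ᵥ x) = RCLike.re (dotProduct (star x) ((Bᴴ * B) *ᵥ x)) := by
    have := rayleigh_eq_nsq Bᴴ x
    rwa [Matrix.conjTranspose_conjTranspose, eq_comm] at this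
  have h2 : nsq (B *ᵥ x) ≤ en x * (c * en (B *ᵥ x)) := by
    rw [h1, ← Matrix.mulVec_mulVec]
    calc RCLike.re (dotProduct (star x) (Bᴴ *ᵥ (B *ᵥ x)))
        ≤ en x * en (Bᴴ *ᵥ (B *ᵥ x)) := re_dot_le _ _
      _ ≤ en x * (c * en (B *ᵥ x)) :=
          mul_le_mul_of_nonneg_left (hB _) (en_nonneg x)
  rcases eq_or_lt_of_le (en_nonneg (B *ᵥ x)) with h0 | h0
  · rw [← h0]
    exact mul_nonneg hc (en_nonneg x)
  · have := h2
    rw [← sq_en (B *ᵥ x), pow_two] at this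
    have h3 : en (B *ᵥ x) ≤ en x * c := by
      have := (mul_le_mul_iff_left₀ h0).mp (by linarith [this] : en (B *ᵥ x) * en (B *ᵥ x) ≤ (en x * c) * en (B *ᵥ x))
      exact this
    linarith [h3]

lemma mulVec_map_conj {p q : Type*} [Fintype p] [Fintype q] (A : Matrix p q 𝕜) (x : q → 𝕜) :
    (A.map (starRingEnd 𝕜)) *ᵥ x = star (A *ᵥ star x) := by
  funext i
  simp [Matrix.mulVec, dotProduct, map_sum, mul_comm]

lemma en_star (v : ι → 𝕜) : en (star v) = en v := by
  unfold en nsq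
  simp

lemma opBound_conj {p : Type*} [Fintype p] {B : Matrix p p 𝕜} {c : ℝ}
    (hB : ∀ x, en (B *ᵥ x) ≤ c * en x) (x : p → 𝕜) :
    en ((B.map (starRingEnd 𝕜)) *ᵥ x) ≤ c * en x := by
  rw [mulVec_map_conj, en_star, ← en_star x]
  exact hB _

lemma opBound_pow {p : Type*} [Fintype p] [DecidableEq p] {B : Matrix p p 𝕜} {c : ℝ}
    (hc : 0 ≤ c) (hB : ∀ x, en (B *ᵥ x) ≤ c * en x) (d : ℕ) (x : p → 𝕜) :
    en ((B ^ d) *ᵥ x) ≤ c ^ d * en x := by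
  induction d generalizing x with
  | zero => simp [Matrix.one_mulVec]
  | succ d ih =>
    rw [pow_succ', ← Matrix.mulVec_mulVec]
    calc en (B *ᵥ (B ^ d *ᵥ x)) ≤ c * en (B ^ d *ᵥ x) := hB _
      _ ≤ c * (c ^ d * en x) := mul_le_mul_of_nonneg_left (ih x) hc
      _ = c ^ (d + 1) * en x := by ring

/-- Sliced bound: applying `B` to slices of `z` along a partial injection. -/
lemma sliced_bound {p q τ τ' : Type*} [Fintype p] [Fintype q] [Fintype τ] [Fintype τ']
    [DecidableEq τ']
    (B : Matrix p q 𝕜) {c : ℝ} (hc : 0 ≤ c) (hB : ∀ x, en (B *ᵥ x) ≤ c * en x)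
    (σ : τ → Option τ') (hσ : ∀ t₁ t₂ t', σ t₁ = some t' → σ t₂ = some t' → t₁ = t₂)
    (z : q × τ' → 𝕜) :
    en (fun it : p × τ => (σ it.2).elim 0 (fun t' => (B *ᵥ fun j => z (j, t')) it.1))
      ≤ c * en z := by
  apply en_le_of_nsq_le hc
  have hsplit : nsq (fun it : p × τ => (σ it.2).elim (0:𝕜)
        (fun t' => (B *ᵥ fun j => z (j, t')) it.1))
      = ∑ t : τ, (σ t).elim 0 (fun t' => nsq (B *ᵥ fun j => z (j, t'))) := by
    rw [nsq, Fintype.sum_prod_type_right]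
    congr 1; funext t
    rcases h : σ t with _ | t'
    · simp [h, nsq]
    · simp only [h, Option.elim]; rfl
  rw [hsplit]
  have hz : nsq z = ∑ t' : τ', nsq (fun j => z (j, t')) := by
    rw [nsq, Fintype.sum_prod_type_right]; rfl
  calc ∑ t : τ, (σ t).elim 0 (fun t' => nsq (B *ᵥ fun j => z (j, t')))
      ≤ ∑ t : τ, (σ t).elim 0 (fun t' => c ^ 2 * nsq (fun j => z (j, t'))) := by
        apply Finset.sum_le_sum
        intro t _
        rcases h : σ t with _ | t'
        · simp
        · simp only [Option.elim]
          exact nsq_le_of_en_le hc (hB _)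
    _ = ∑ t : τ, ∑ t' : τ', (if σ t = some t' then c ^ 2 * nsq (fun j => z (j, t')) else 0) := by
        congr 1; funext t
        rcases h : σ t with _ | t'
        · simp [h]
        · rw [Finset.sum_eq_single t']
          · simp [h]
          · intro b _ hb; simp [h, hb, Ne.symm hb]
          · intro hb; exact absurd (Finset.mem_univ _) hb
    _ = ∑ t' : τ', ∑ t : τ, (if σ t = some t' then c ^ 2 * nsq (fun j => z (j, t')) else 0) :=
        Finset.sum_comm
    _ ≤ ∑ t' : τ', c ^ 2 * nsq (fun j => z (j, t')) := by
        apply Finset.sum_le_sum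
        intro t' _
        rcases em (∃ t, σ t = some t') with ⟨t₀, ht₀⟩ | hno
        · rw [Finset.sum_eq_single t₀]
          · rw [ht₀, if_pos rfl]
          · intro b _ hb
            rw [if_neg]
            intro hbt
            exact hb (hσ b t₀ t' hbt ht₀)
          · intro hb; exact absurd (Finset.mem_univ _) hb
        · rw [Finset.sum_eq_zero]
          · exact mul_nonneg (sq_nonneg c) (nsq_nonneg _)
          · intro b _
            rw [if_neg]
            intro hbt
            exact hno ⟨b, hbt⟩
    _ = c ^ 2 * nsq z := by rw [hz, Finset.mul_sum]

lemma opBound_one {p : Type*} [Fintype p] [DecidableEq p] (x : p → 𝕜) :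
    en ((1 : Matrix p p 𝕜) *ᵥ x) = en x := by rw [Matrix.one_mulVec]


lemma en_neg (v : ι → 𝕜) : en (-v) = en v := by simp [en, nsq]

lemma en_zero : en (0 : ι → 𝕜) = 0 := by simp [en, nsq]

lemma en_sub_le (v w : ι → 𝕜) : en (v - w) ≤ en v + en w := by
  rw [sub_eq_add_neg]
  exact (en_add_le v (-w)).trans (by rw [en_neg])

lemma sum_mulVec' {p q δ : Type*} [Fintype p] [Fintype q] (s : Finset δ)
    (f : δ → Matrix p q 𝕜) (v : q → 𝕜) :
    (∑ d ∈ s, f d) *ᵥ v = ∑ d ∈ s, f d *ᵥ v := by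
  induction s using Finset.cons_induction with
  | empty => simp [Matrix.zero_mulVec]
  | cons a s ha ih => rw [Finset.sum_cons, Finset.sum_cons, Matrix.add_mulVec, ih]

lemma en_sum_le {δ : Type*} (s : Finset δ) (f : δ → (ι → 𝕜)) :
    en (∑ d ∈ s, f d) ≤ ∑ d ∈ s, en (f d) := by
  induction s using Finset.cons_induction with
  | empty => simp [en_zero]
  | cons a s ha ih =>
    rw [Finset.sum_cons, Finset.sum_cons]
    exact (en_add_le _ _).trans (by linarith)

lemma nsq_elim (a : ι → 𝕜) (b : κ → 𝕜) : nsq (Sum.elim a b) = nsq a + nsq b := by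
  rw [nsq_sum_type]
  rfl

lemma en_split_le (z : ι ⊕ κ → 𝕜) :
    en (z ∘ Sum.inl) + en (z ∘ Sum.inr) ≤ Real.sqrt 2 * en z := by
  have h := nsq_sum_type z
  have h1 := sq_en (z ∘ Sum.inl)
  have h2 := sq_en (z ∘ Sum.inr)
  have h3 := sq_en z
  have e1 := en_nonneg (z ∘ Sum.inl)
  have e2 := en_nonneg (z ∘ Sum.inr)
  calc en (z ∘ Sum.inl) + en (z ∘ Sum.inr)
      = Real.sqrt ((en (z ∘ Sum.inl) + en (z ∘ Sum.inr)) ^ 2) :=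
        (Real.sqrt_sq (by positivity)).symm
    _ ≤ Real.sqrt (2 * nsq z) := Real.sqrt_le_sqrt (by nlinarith [sq_nonneg (en (z ∘ Sum.inl) - en (z ∘ Sum.inr))])
    _ = Real.sqrt 2 * en z := by rw [Real.sqrt_mul (by norm_num)]; rfl

/-- injectivity data and the operator bound for `Wᴴ`. -/
lemma WH_bound (s : ℝ) (hs : 0 ≤ s)
    (hB : ∀ x : Fin ℓ → 𝕜, en ((A.map (starRingEnd 𝕜)) *ᵥ x) ≤ s * en x)
    (z : (Fin ℓ × (Fin ε × Fin n)) ⊕ (Fin ℓ × (Fin (ε+1) × Fin n)) → 𝕜) :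
    en ((Wm ℓ ε n A)ᴴ *ᵥ z)
      ≤ (1 + Real.sqrt 2 * Real.sqrt (1 + s^2) * (∑ d ∈ Finset.range ε, s ^ d)) * en z := by
  classical
  have hBd : ∀ (d : ℕ) (x : Fin ℓ → 𝕜), en (((A.map (starRingEnd 𝕜)) ^ d) *ᵥ x) ≤ s ^ d * en x :=
    opBound_pow hs hB
  set z₁ : Fin ℓ × (Fin ε × Fin n) → 𝕜 := z ∘ Sum.inl with hz₁
  set z₂ : Fin ℓ × (Fin (ε+1) × Fin n) → 𝕜 := z ∘ Sum.inr with hz₂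
  set v : Fin ℓ × (Fin (ε+1) × Fin n) → 𝕜 := z₂ - (M22 ℓ ε n (𝕜 := 𝕜))ᴴ *ᵥ z₁ with hv
  set w : Fin ℓ × (Fin ε × Fin n) → 𝕜 := (Hs ℓ ε n A)ᴴ *ᵥ v with hw
  -- structure of `Wᴴ *ᵥ z`
  have hWz : (Wm ℓ ε n A)ᴴ *ᵥ z
      = Sum.elim w (-((M11 ℓ ε n A)ᴴ *ᵥ w)) + Sum.elim (0 : Fin ℓ × (Fin ε × Fin n) → 𝕜) z₁ := by
    rw [Wm, Matrix.fromBlocks_conjTranspose, Matrix.fromBlocks_mulVec]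
    have hc1 : (-(M22 ℓ ε n (𝕜 := 𝕜) * Hs ℓ ε n A))ᴴ *ᵥ (z ∘ Sum.inl)
        + (Hs ℓ ε n A)ᴴ *ᵥ (z ∘ Sum.inr) = w := by
      rw [Matrix.conjTranspose_neg, Matrix.conjTranspose_mul, Matrix.neg_mulVec,
        ← Matrix.mulVec_mulVec, hw, hv, Matrix.mulVec_sub, neg_add_eq_sub, hz₁, hz₂]
    have hc2 : ((1 : Matrix (Fin ℓ × (Fin ε × Fin n)) (Fin ℓ × (Fin ε × Fin n)) 𝕜)
          + M22 ℓ ε n (𝕜 := 𝕜) * (Hs ℓ ε n A * M11 ℓ ε n A))ᴴ *ᵥ (z ∘ Sum.inl)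
        + (-(Hs ℓ ε n A * M11 ℓ ε n A))ᴴ *ᵥ (z ∘ Sum.inr)
        = z₁ - (M11 ℓ ε n A)ᴴ *ᵥ w := by
      rw [hw, hv, hz₁, hz₂]
      simp only [Matrix.conjTranspose_add, Matrix.conjTranspose_one, Matrix.conjTranspose_mul,
        Matrix.conjTranspose_neg, Matrix.add_mulVec, Matrix.one_mulVec, Matrix.neg_mulVec,
        ← Matrix.mulVec_mulVec, Matrix.mulVec_sub]
      module
    rw [hc1, hc2]
    funext r
    rcases r with r | r
    · simp
    · simp [sub_eq_neg_add]
  -- bounds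
  have hM22 : en ((M22 ℓ ε n (𝕜 := 𝕜))ᴴ *ᵥ z₁) ≤ 1 * en z₁ := by
    rw [M22_apply_form]
    exact sliced_bound (1 : Matrix (Fin ℓ) (Fin ℓ) 𝕜) zero_le_one
      (fun x => by rw [Matrix.one_mulVec, one_mul])
      (fun t : Fin (ε+1) × Fin n =>
        if h : 1 ≤ (t.1 : ℕ) then
          some ((⟨(t.1 : ℕ) - 1, by omega⟩ : Fin ε), t.2) else none)
      (by
        intro t₁ t₂ t' h1 h2
        split_ifs at h1 h2 with c1 c2
        have e1 := Option.some.inj h1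
        have e2 := Option.some.inj h2
        have hx1 : ((t₁.1 : ℕ) - 1) = (t'.1 : ℕ) := congrArg (fun p => (p.1 : ℕ)) e1
        have hx2 : ((t₂.1 : ℕ) - 1) = (t'.1 : ℕ) := congrArg (fun p => (p.1 : ℕ)) e2
        have hy1 : t₁.2 = t'.2 := congrArg Prod.snd e1
        have hy2 : t₂.2 = t'.2 := congrArg Prod.snd e2
        have : (t₁.1 : ℕ) = (t₂.1 : ℕ) := by omega
        rw [Prod.ext_iff]
        exact ⟨Fin.ext this, hy1.trans hy2.symm⟩) z₁
  have hv_bound : en v ≤ Real.sqrt 2 * en z := by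
    calc en v ≤ en z₂ + en ((M22 ℓ ε n (𝕜 := 𝕜))ᴴ *ᵥ z₁) := en_sub_le _ _
      _ ≤ en z₂ + 1 * en z₁ := by linarith [hM22]
      _ = en (z ∘ Sum.inl) + en (z ∘ Sum.inr) := by rw [one_mul, hz₁, hz₂]; ring
      _ ≤ Real.sqrt 2 * en z := en_split_le z
  have hw_bound : en w ≤ (∑ d ∈ Finset.range ε, s ^ d) * en v := by
    rw [hw, Hs, Matrix.conjTranspose_sum, sum_mulVec']
    calc en (∑ d ∈ Finset.range ε, (Hd ℓ ε n A d)ᴴ *ᵥ v)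
        ≤ ∑ d ∈ Finset.range ε, en ((Hd ℓ ε n A d)ᴴ *ᵥ v) := en_sum_le _ _
      _ ≤ ∑ d ∈ Finset.range ε, s ^ d * en v := by
          apply Finset.sum_le_sum
          intro d _
          rw [Hd_apply_form]
          exact sliced_bound ((A.map (starRingEnd 𝕜)) ^ d) (pow_nonneg hs d) (hBd d)
            (fun t : Fin ε × Fin n =>
              if h : d ≤ (t.1 : ℕ) then
                some ((⟨(t.1 : ℕ) - d, by omega⟩ : Fin (ε+1)), t.2) else none)
            (by
              intro t₁ t₂ t' h1 h2
              split_ifs at h1 h2 with c1 c2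
              have e1 := Option.some.inj h1
              have e2 := Option.some.inj h2
              have hx1 : ((t₁.1 : ℕ) - d) = (t'.1 : ℕ) := congrArg (fun p => (p.1 : ℕ)) e1
              have hx2 : ((t₂.1 : ℕ) - d) = (t'.1 : ℕ) := congrArg (fun p => (p.1 : ℕ)) e2
              have hy1 : t₁.2 = t'.2 := congrArg Prod.snd e1
              have hy2 : t₂.2 = t'.2 := congrArg Prod.snd e2
              have : (t₁.1 : ℕ) = (t₂.1 : ℕ) := by omega
              rw [Prod.ext_iff]
              exact ⟨Fin.ext this, hy1.trans hy2.symm⟩) v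
      _ = (∑ d ∈ Finset.range ε, s ^ d) * en v := by rw [Finset.sum_mul]
  have hM11w : en ((M11 ℓ ε n A)ᴴ *ᵥ w) ≤ s * en w := by
    rw [M11_apply_form]
    have hb1 : ∀ x : Fin ℓ → 𝕜, en ((A.map (starRingEnd 𝕜)) *ᵥ x) ≤ s * en x := hB
    exact sliced_bound (A.map (starRingEnd 𝕜)) hs hb1
      (fun t : Fin ε × Fin n => some t)
      (fun t₁ t₂ t' h1 h2 => (Option.some.inj h1).trans (Option.some.inj h2).symm) w
  -- combine
  have henP : en (Sum.elim w (-((M11 ℓ ε n A)ᴴ *ᵥ w)))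
      ≤ Real.sqrt (1 + s^2) * en w := by
    apply en_le_of_nsq_le (Real.sqrt_nonneg _)
    rw [Real.sq_sqrt (by positivity)]
    rw [nsq_elim]
    have h1 : nsq (-((M11 ℓ ε n A)ᴴ *ᵥ w)) = nsq ((M11 ℓ ε n A)ᴴ *ᵥ w) := by simp [nsq]
    have h2 : nsq ((M11 ℓ ε n A)ᴴ *ᵥ w) ≤ s^2 * nsq w := nsq_le_of_en_le hs hM11w
    rw [h1]
    nlinarith [nsq_nonneg w]
  have henQ : en (Sum.elim (0 : Fin ℓ × (Fin ε × Fin n) → 𝕜) z₁) ≤ 1 * en z := by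
    apply en_le_of_nsq_le zero_le_one
    rw [nsq_elim, one_pow, one_mul]
    have h0 : nsq (0 : Fin ℓ × (Fin ε × Fin n) → 𝕜) = 0 := by simp [nsq]
    have := nsq_sum_type z
    have := nsq_nonneg (z ∘ Sum.inr)
    rw [h0, zero_add, hz₁]
    linarith
  have hsum0 : 0 ≤ (∑ d ∈ Finset.range ε, s ^ d) :=
    Finset.sum_nonneg fun d _ => pow_nonneg hs d
  calc en ((Wm ℓ ε n A)ᴴ *ᵥ z)
      ≤ en (Sum.elim w (-((M11 ℓ ε n A)ᴴ *ᵥ w)))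
        + en (Sum.elim (0 : Fin ℓ × (Fin ε × Fin n) → 𝕜) z₁) := by
        rw [hWz]; exact en_add_le _ _
    _ ≤ Real.sqrt (1 + s^2) * en w + 1 * en z := by
        have := henP; have := henQ; linarith
    _ ≤ Real.sqrt (1 + s^2) * ((∑ d ∈ Finset.range ε, s ^ d) * (Real.sqrt 2 * en z))
        + 1 * en z := by
        have hsq : 0 ≤ Real.sqrt (1 + s^2) := Real.sqrt_nonneg _
        have h5 : en w ≤ (∑ d ∈ Finset.range ε, s ^ d) * (Real.sqrt 2 * en z) :=
          hw_bound.trans (mul_le_mul_of_nonneg_left hv_bound hsum0)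
        nlinarith
    _ = (1 + Real.sqrt 2 * Real.sqrt (1 + s^2) * (∑ d ∈ Finset.range ε, s ^ d)) * en z := by
        ring

lemma const_bound (hε : 0 < ε) (s : ℝ) (hs : 0 ≤ s) :
    Real.sqrt 2 * Real.sqrt (1 + s^2) * (∑ d ∈ Finset.range ε, s ^ d)
      ≤ 2 * (ε : ℝ) * max 1 (s ^ ε) := by
  have h1 : Real.sqrt 2 * Real.sqrt (1 + s^2) ≤ 2 * max 1 s := by
    rw [← Real.sqrt_mul (by norm_num)]
    have h2 : 2 * (1 + s^2) ≤ (2 * max 1 s)^2 := by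
      rcases le_total s 1 with h | h
      · rw [max_eq_left h]; nlinarith
      · rw [max_eq_right h]; nlinarith
    calc Real.sqrt (2 * (1 + s^2)) ≤ Real.sqrt ((2 * max 1 s)^2) := Real.sqrt_le_sqrt h2
      _ = 2 * max 1 s := Real.sqrt_sq (by positivity)
  have h3 : (∑ d ∈ Finset.range ε, s ^ d) ≤ (ε : ℝ) * max 1 (s ^ (ε - 1)) := by
    calc ∑ d ∈ Finset.range ε, s ^ d
        ≤ ∑ _d ∈ Finset.range ε, max 1 (s ^ (ε - 1)) := by
          apply Finset.sum_le_sum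
          intro d hd
          rcases le_total s 1 with h | h
          · exact le_max_of_le_left (pow_le_one₀ hs h)
          · refine le_max_of_le_right (pow_le_pow_right₀ h ?_)
            have := Finset.mem_range.mp hd; omega
      _ = (ε : ℝ) * max 1 (s ^ (ε - 1)) := by
          rw [Finset.sum_const, Finset.card_range, nsmul_eq_mul]
  have hmax : max 1 s * max 1 (s ^ (ε - 1)) ≤ max 1 (s ^ ε) := by
    rcases le_total s 1 with h | h
    · rw [max_eq_left h, max_eq_left (pow_le_one₀ hs h), mul_one]
      exact le_max_left _ _
    · rw [max_eq_right h, max_eq_right (one_le_pow₀ h), max_eq_right (one_le_pow₀ h)]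
      rw [← pow_succ']
      apply le_of_eq
      congr 1
      omega
  have hmx1 : (0:ℝ) ≤ max 1 s := le_trans zero_le_one (le_max_left _ _)
  have hmx2 : (0:ℝ) ≤ max 1 (s ^ (ε-1)) := le_trans zero_le_one (le_max_left _ _)
  have hsum0 : 0 ≤ (∑ d ∈ Finset.range ε, s ^ d) :=
    Finset.sum_nonneg fun d _ => pow_nonneg hs d
  have hε0 : (0:ℝ) ≤ (ε : ℝ) := Nat.cast_nonneg ε
  calc Real.sqrt 2 * Real.sqrt (1 + s^2) * (∑ d ∈ Finset.range ε, s ^ d)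
      ≤ (2 * max 1 s) * (∑ d ∈ Finset.range ε, s ^ d) :=
        mul_le_mul_of_nonneg_right h1 hsum0
    _ ≤ (2 * max 1 s) * ((ε : ℝ) * max 1 (s ^ (ε - 1))) :=
        mul_le_mul_of_nonneg_left h3 (by positivity)
    _ = 2 * (ε : ℝ) * (max 1 s * max 1 (s ^ (ε - 1))) := by ring
    _ ≤ 2 * (ε : ℝ) * max 1 (s ^ ε) :=
        mul_le_mul_of_nonneg_left hmax (by positivity)

end S0

end S0aux

/-- Lemma 3.1. Lower bound for the smallest singular value `ω₁` of the
block matrix `[[Aᵀ⊗I_{εn}, I_ℓ⊗E_ε⊗I_n], [I_ℓ⊗I_{εn}, I_ℓ⊗F_ε⊗I_n]]`. -/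
theorem statement0 {𝕜 : Type*} [RCLike 𝕜] (ℓ ε n : ℕ) (hℓ : 0 < ℓ) (hε : 0 < ε) (hn : 0 < n)
    (A : Matrix (Fin ℓ) (Fin ℓ) 𝕜) :
    1 / (1 + 2 * (ε : ℝ) * max 1 (specNorm A ^ ε)) ≤
      sigmaMin (Matrix.fromBlocks
        (Aᵀ ⊗ₖ (1 : Matrix (Fin ε × Fin n) (Fin ε × Fin n) 𝕜))
        ((1 : Matrix (Fin ℓ) (Fin ℓ) 𝕜) ⊗ₖ (Ek 𝕜 ε ⊗ₖ (1 : Matrix (Fin n) (Fin n) 𝕜)))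
        ((1 : Matrix (Fin ℓ) (Fin ℓ) 𝕜) ⊗ₖ (1 : Matrix (Fin ε × Fin n) (Fin ε × Fin n) 𝕜))
        ((1 : Matrix (Fin ℓ) (Fin ℓ) 𝕜) ⊗ₖ (Fk 𝕜 ε ⊗ₖ (1 : Matrix (Fin n) (Fin n) 𝕜)))) := by
  classical
  haveI : Nonempty (Fin ℓ) := ⟨⟨0, hℓ⟩⟩
  haveI : Nonempty (Fin ε) := ⟨⟨0, hε⟩⟩
  haveI : Nonempty (Fin n) := ⟨⟨0, hn⟩⟩
  haveI : Nonempty ((Fin ℓ × (Fin ε × Fin n)) ⊕ (Fin ℓ × (Fin ε × Fin n))) :=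
    ⟨Sum.inl (Classical.arbitrary _)⟩
  set s := specNorm A with hsdef
  have hs : 0 ≤ s := S0.specNorm_nonneg A
  have hAH : ∀ x, S0.en (Aᴴ *ᵥ x) ≤ s * S0.en x := S0.opBound_conjTranspose A
  have hA2 : ∀ x, S0.en (A *ᵥ x) ≤ s * S0.en x := S0.opBound_flip hs hAH
  have hB : ∀ x, S0.en ((A.map (starRingEnd 𝕜)) *ᵥ x) ≤ s * S0.en x := S0.opBound_conj hA2
  set K := max 1 (s ^ ε) with hKdef
  have hK1 : (1:ℝ) ≤ K := le_max_left _ _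
  set C := 1 + 2 * (ε:ℝ) * K with hCdef
  have hCpos : 0 < C := by
    have h2 : 0 ≤ 2 * (ε:ℝ) * K :=
      mul_nonneg (by positivity) (le_trans zero_le_one hK1)
    linarith
  have hWH : ∀ z, S0.en ((S0.Wm ℓ ε n A)ᴴ *ᵥ z) ≤ C * S0.en z := by
    intro z
    calc S0.en ((S0.Wm ℓ ε n A)ᴴ *ᵥ z)
        ≤ (1 + Real.sqrt 2 * Real.sqrt (1 + s^2) * (∑ d ∈ Finset.range ε, s ^ d)) * S0.en z :=
          S0.WH_bound ℓ ε n A s hs hB z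
      _ ≤ C * S0.en z := by
          apply mul_le_mul_of_nonneg_right _ (S0.en_nonneg z)
          have := S0.const_bound ε hε s hs
          rw [hCdef, hKdef]
          linarith
  show 1 / C ≤ sigmaMin (S0.Mm ℓ ε n A)
  rw [sigmaMin]
  have key : ∀ i, (1/C)^2
      ≤ (Matrix.isHermitian_mul_conjTranspose_self (S0.Mm ℓ ε n A)).eigenvalues i := by
    intro i
    rw [S0.eig_eq_nsq]
    set vi : ((Fin ℓ × (Fin ε × Fin n)) ⊕ (Fin ℓ × (Fin ε × Fin n))) → 𝕜 :=
      ⇑((Matrix.isHermitian_mul_conjTranspose_self (S0.Mm ℓ ε n A)).eigenvectorBasis i)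
      with hvi
    have hu : (S0.Wm ℓ ε n A)ᴴ *ᵥ ((S0.Mm ℓ ε n A)ᴴ *ᵥ vi) = vi := by
      rw [Matrix.mulVec_mulVec, ← Matrix.conjTranspose_mul, S0.M_mul_W,
        Matrix.conjTranspose_one, Matrix.one_mulVec]
    have h1 : S0.en vi = 1 := by
      rw [S0.en, hvi, S0.nsq_eigenvector]
      exact Real.sqrt_one
    have h2 := hWH ((S0.Mm ℓ ε n A)ᴴ *ᵥ vi)
    rw [hu, h1] at h2
    have h3 : 1/C ≤ S0.en ((S0.Mm ℓ ε n A)ᴴ *ᵥ vi) := by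
      rw [div_le_iff₀ hCpos]
      nlinarith
    calc (1/C)^2 ≤ (S0.en ((S0.Mm ℓ ε n A)ᴴ *ᵥ vi))^2 := by
          apply pow_le_pow_left₀ (by positivity) h3
      _ = S0.nsq ((S0.Mm ℓ ε n A)ᴴ *ᵥ vi) := S0.sq_en _
  calc 1/C = Real.sqrt ((1/C)^2) := (Real.sqrt_sq (by positivity)).symm
    _ ≤ _ := Real.sqrt_le_sqrt (le_ciInf key)
end

section
/- Let ℓ, η, m be positive integers and let A be an ℓ×ℓ matrix over F = ℝ or ℂ. Let ω₂ be the smallest singular value (the 2ηmℓ-th largest singular value) of the 2ηmℓ × (2η+1)mℓ block matrix [[E_η⊗I_{mℓ}, I_{ηm}⊗A],[F_η⊗I_{mℓ}, I_{ηm}⊗I_ℓ]]. Then ω₂ ≥ 1/(1 + 2η·max(1, ‖A‖₂^η)). -/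
open Matrix
open scoped Kronecker

noncomputable section

namespace Stmt1Aux
open Finset

variable {𝕜 : Type*} [RCLike 𝕜]

lemma combine (x y A B s t : ℝ) (hx : 0 ≤ x) (hy : 0 ≤ y) (hA : 0 ≤ A) (hB : 0 ≤ B)
    (hs : 0 ≤ s) (ht : 0 ≤ t) (h1 : x^2 ≤ A*s) (h2 : y^2 ≤ B*t) :
    (x+y)^2 ≤ (A+B)*(s+t) := by
  nlinarith [sq_nonneg (x - y), sq_nonneg (A*t - B*s), sq_nonneg (x*t - y*s),
    mul_nonneg hx hy, mul_nonneg hA ht, mul_nonneg hB hs, sq_nonneg (x*B - y*A)]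

lemma sum_sq_le (s : Finset ℕ) (x a g : ℕ → ℝ) (hx : ∀ k ∈ s, 0 ≤ x k)
    (ha : ∀ k ∈ s, 0 ≤ a k) (hg : ∀ k ∈ s, 0 ≤ g k)
    (h : ∀ k ∈ s, x k ^ 2 ≤ a k * g k) :
    (∑ k ∈ s, x k)^2 ≤ (∑ k ∈ s, a k) * (∑ k ∈ s, g k) := by
  classical
  induction s using Finset.induction with
  | empty => simp
  | @insert i s hi ih =>
    simp only [Finset.sum_insert hi]
    exact combine _ _ _ _ _ _ (hx i (mem_insert_self i s))
      (Finset.sum_nonneg fun k hk => hx k (mem_insert_of_mem hk))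
      (ha i (mem_insert_self i s))
      (Finset.sum_nonneg fun k hk => ha k (mem_insert_of_mem hk))
      (hg i (mem_insert_self i s))
      (Finset.sum_nonneg fun k hk => hg k (mem_insert_of_mem hk))
      (h i (mem_insert_self i s))
      (ih (fun k hk => hx k (mem_insert_of_mem hk)) (fun k hk => ha k (mem_insert_of_mem hk))
        (fun k hk => hg k (mem_insert_of_mem hk)) (fun k hk => h k (mem_insert_of_mem hk)))

def en {ι : Type*} [Fintype ι] (v : ι → 𝕜) : ℝ := ‖(WithLp.equiv 2 (ι → 𝕜)).symm v‖

lemma en_nonneg {ι : Type*} [Fintype ι] (v : ι → 𝕜) : 0 ≤ en v := norm_nonneg _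

lemma en_zero {ι : Type*} [Fintype ι] : en (0 : ι → 𝕜) = 0 := by simp [en]

lemma sq_en {ι : Type*} [Fintype ι] (v : ι → 𝕜) : en v ^ 2 = ∑ b, ‖v b‖^2 := by
  rw [en, EuclideanSpace.norm_eq, Real.sq_sqrt (Finset.sum_nonneg fun _ _ => sq_nonneg _)]
  rfl

lemma en_add_le {ι : Type*} [Fintype ι] (u v : ι → 𝕜) : en (u + v) ≤ en u + en v := by
  simpa [en] using norm_add_le ((WithLp.equiv 2 (ι → 𝕜)).symm u) ((WithLp.equiv 2 (ι → 𝕜)).symm v)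

lemma en_sub_le {ι : Type*} [Fintype ι] (u v : ι → 𝕜) : en (u - v) ≤ en u + en v := by
  simpa [en, sub_eq_add_neg] using
    norm_add_le ((WithLp.equiv 2 (ι → 𝕜)).symm u) ((WithLp.equiv 2 (ι → 𝕜)).symm (-v))

lemma en_sum_le {ι : Type*} [Fintype ι] {s : Finset ℕ} (f : ℕ → ι → 𝕜) :
    en (∑ k ∈ s, f k) ≤ ∑ k ∈ s, en (f k) := by
  classical
  induction s using Finset.induction with
  | empty => simp [en_zero]
  | @insert i s hi ih =>
    rw [Finset.sum_insert hi, Finset.sum_insert hi]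
    exact le_trans (en_add_le _ _) (by linarith [ih])

lemma re_conj_mul_self (z : 𝕜) : RCLike.re (star z * z) = ‖z‖^2 := by
  rw [RCLike.star_def, RCLike.conj_mul, ← RCLike.ofReal_pow, RCLike.ofReal_re]

lemma re_dot_eq {p q : Type*} [Fintype p] [Fintype q] (M : Matrix p q 𝕜) (v : p → 𝕜) :
    RCLike.re (star v ⬝ᵥ ((M * Mᴴ) *ᵥ v)) = ∑ j, ‖(Mᴴ *ᵥ v) j‖^2 := by
  rw [← Matrix.mulVec_mulVec]
  rw [Matrix.dotProduct_mulVec]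
  rw [show star v ᵥ* M = star (Mᴴ *ᵥ v) by rw [Matrix.star_mulVec, conjTranspose_conjTranspose]]
  simp only [dotProduct, Pi.star_apply, map_sum]
  exact Finset.sum_congr rfl fun j _ => re_conj_mul_self _

lemma rayleigh_upper {p : Type*} [Fintype p] [DecidableEq p] (H : Matrix p p 𝕜)
    (hH : H.IsHermitian) (v : p → 𝕜) :
    RCLike.re (star v ⬝ᵥ (H *ᵥ v)) ≤ (⨆ i, hH.eigenvalues i) * ∑ j, ‖v j‖^2 := by
  classical
  set U : Matrix p p 𝕜 := (hH.eigenvectorUnitary : Matrix p p 𝕜) with hU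
  have hUU : U * star U = 1 := (Matrix.mem_unitaryGroup_iff).mp (hH.eigenvectorUnitary).2
  set w : p → 𝕜 := star U *ᵥ v with hw
  have hsv : star v ᵥ* U = star w := by
    rw [hw, Matrix.star_mulVec, Matrix.star_eq_conjTranspose, conjTranspose_conjTranspose]
  have key : star v ⬝ᵥ (H *ᵥ v) = star w ⬝ᵥ ((Matrix.diagonal (RCLike.ofReal ∘ hH.eigenvalues)) *ᵥ w) := by
    conv_lhs => rw [hH.spectral_theorem, Unitary.conjStarAlgAut_apply]
    rw [← Matrix.mulVec_mulVec, ← Matrix.mulVec_mulVec, Matrix.dotProduct_mulVec, hsv]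
  have keyn : star v ⬝ᵥ v = star w ⬝ᵥ w := by
    conv_rhs => rw [← hsv, ← Matrix.dotProduct_mulVec, hw, Matrix.mulVec_mulVec, hUU,
      Matrix.one_mulVec]
  have hbdd : BddAbove (Set.range hH.eigenvalues) := Set.Finite.bddAbove (Set.finite_range _)
  have hsum : ∑ j, ‖v j‖^2 = ∑ j, ‖w j‖^2 := by
    have h1 : RCLike.re (star v ⬝ᵥ v) = RCLike.re (star w ⬝ᵥ w) := by rw [keyn]
    simpa only [dotProduct, Pi.star_apply, map_sum,
      (fun z => re_conj_mul_self (𝕜 := 𝕜) z)] using h1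
  rw [key, hsum]
  have : RCLike.re (star w ⬝ᵥ ((Matrix.diagonal (RCLike.ofReal ∘ hH.eigenvalues)) *ᵥ w))
      = ∑ j, hH.eigenvalues j * ‖w j‖^2 := by
    simp only [dotProduct, Pi.star_apply, map_sum]
    refine Finset.sum_congr rfl fun j _ => ?_
    rw [Matrix.mulVec_diagonal]
    rw [show star (w j) * ((RCLike.ofReal ∘ hH.eigenvalues) j * w j)
        = (hH.eigenvalues j : 𝕜) * (star (w j) * w j) by simp only [Function.comp_apply]; ring]
    rw [RCLike.star_def, RCLike.conj_mul, ← RCLike.ofReal_pow, ← RCLike.ofReal_mul, RCLike.ofReal_re]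
  rw [this, Finset.mul_sum]
  refine Finset.sum_le_sum fun j _ => ?_
  exact mul_le_mul_of_nonneg_right (le_ciSup hbdd j) (sq_nonneg _)

lemma specNorm_nonneg {p q : Type*} [Fintype p] [Fintype q] [DecidableEq p]
    (M : Matrix p q 𝕜) : 0 ≤ specNorm M := Real.sqrt_nonneg _

lemma en_conjT_le {p : Type*} [Fintype p] [DecidableEq p] [Nonempty p]
    (A : Matrix p p 𝕜) (v : p → 𝕜) :
    en (Aᴴ *ᵥ v) ≤ specNorm A * en v := by
  have hb : BddAbove (Set.range (Matrix.isHermitian_mul_conjTranspose_self A).eigenvalues) :=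
    Set.Finite.bddAbove (Set.finite_range _)
  have hsup : 0 ≤ ⨆ i, (Matrix.isHermitian_mul_conjTranspose_self A).eigenvalues i :=
    le_trans (Matrix.eigenvalues_self_mul_conjTranspose_nonneg A (Classical.arbitrary p))
      (le_ciSup hb _)
  have h1 : en (Aᴴ *ᵥ v)^2 ≤ (⨆ i, (Matrix.isHermitian_mul_conjTranspose_self A).eigenvalues i) * en v^2 := by
    rw [sq_en, sq_en, ← re_dot_eq]
    exact rayleigh_upper _ _ v
  have h2 := Real.sqrt_le_sqrt h1
  rwa [Real.sqrt_sq (en_nonneg _), Real.sqrt_mul hsup, Real.sqrt_sq (en_nonneg _)] at h2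

lemma en_pow_conjT_le {p : Type*} [Fintype p] [DecidableEq p] [Nonempty p]
    (A : Matrix p p 𝕜) (s : ℕ) (v : p → 𝕜) :
    en ((Aᴴ)^s *ᵥ v) ≤ specNorm A ^ s * en v := by
  induction s with
  | zero => simp [Matrix.one_mulVec]
  | succ n ih =>
    rw [pow_succ', ← Matrix.mulVec_mulVec]
    calc en (Aᴴ *ᵥ ((Aᴴ)^n *ᵥ v)) ≤ specNorm A * en ((Aᴴ)^n *ᵥ v) := en_conjT_le _ _
      _ ≤ specNorm A * (specNorm A ^ n * en v) :=
          mul_le_mul_of_nonneg_left ih (specNorm_nonneg _)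
      _ = specNorm A ^ (n+1) * en v := by ring

lemma core {ℓ η : ℕ} (hℓ : 0 < ℓ) (hη : 0 < η) (A : Matrix (Fin ℓ) (Fin ℓ) 𝕜)
    (p q w z : ℕ → Fin ℓ → 𝕜)
    (hw : ∀ j, w j = p j + (if j = 0 then 0 else q (j-1)))
    (hz : ∀ i, z i = Aᴴ *ᵥ p i + q i) :
    ∑ j ∈ range η, (en (p j)^2 + en (q j)^2) ≤
      (1 + 2*(η:ℝ)*max 1 (specNorm A ^ η))^2 *
      (∑ k ∈ range (η+1), en (w k)^2 + ∑ i ∈ range η, en (z i)^2) := by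
  haveI : Nonempty (Fin ℓ) := ⟨⟨0, hℓ⟩⟩
  set N := specNorm A with hNdef
  set M := max 1 (N^η) with hMdef
  have hN0 : 0 ≤ N := specNorm_nonneg _
  have hM1 : (1:ℝ) ≤ M := le_max_left _ _
  have hM0 : (0:ℝ) ≤ M := by linarith
  have hNM : ∀ s, s ≤ η → N^s ≤ M := by
    intro s hs
    rcases le_total N 1 with h | h
    · exact le_trans (pow_le_one₀ hN0 h) hM1
    · exact le_trans (pow_le_pow_right₀ h hs) (le_max_right _ _)
  set zm : ℕ → Fin ℓ → 𝕜 := fun k => if k = 0 then 0 else z (k-1) with hzmdef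
  set G : ℝ := ∑ k ∈ range (η+1), en (w k)^2 + ∑ i ∈ range η, en (z i)^2 with hGdef
  have hG0 : 0 ≤ G := add_nonneg (Finset.sum_nonneg fun _ _ => sq_nonneg _)
    (Finset.sum_nonneg fun _ _ => sq_nonneg _)
  -- closed form for p
  have CF : ∀ j, p j = ∑ k ∈ range (j+1), ((Aᴴ)^(j-k)) *ᵥ (w k - zm k) := by
    intro j; induction j with
    | zero =>
      have h0 := hw 0
      rw [if_pos rfl, add_zero] at h0
      simp [← h0, hzmdef, Matrix.one_mulVec]
    | succ j ih =>
      have h1 := hw (j+1)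
      rw [if_neg (Nat.succ_ne_zero j)] at h1
      simp only [Nat.add_sub_cancel] at h1
      have hq' : q j = z j - Aᴴ *ᵥ p j := by rw [hz j]; abel
      have hp1 : p (j+1) = w (j+1) - zm (j+1) + Aᴴ *ᵥ p j := by
        have hzm1 : zm (j+1) = z j := by
          rw [hzmdef]; simp
        rw [hzm1, h1, hq']; abel
      have pull : Aᴴ *ᵥ p j = ∑ k ∈ range (j+1), ((Aᴴ)^(j+1-k)) *ᵥ (w k - zm k) := by
        rw [ih, ← Matrix.mulVecLin_apply, map_sum]
        refine Finset.sum_congr rfl fun k hk => ?_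
        have hk' := Finset.mem_range.1 hk
        have he : j + 1 - k = (j - k) + 1 := by omega
        rw [Matrix.mulVecLin_apply, Matrix.mulVec_mulVec, ← pow_succ', ← he]
      rw [hp1, pull, Finset.sum_range_succ (fun k => ((Aᴴ)^(j+1-k)) *ᵥ (w k - zm k)) (j+1)]
      simp only [Nat.sub_self, pow_zero, Matrix.one_mulVec]
      abel
  have CF2 : ∀ i, Aᴴ *ᵥ p i = ∑ k ∈ range (i+1), ((Aᴴ)^(i+1-k)) *ᵥ (w k - zm k) := by
    intro i
    rw [CF i, ← Matrix.mulVecLin_apply, map_sum]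
    refine Finset.sum_congr rfl fun k hk => ?_
    have hk' := Finset.mem_range.1 hk
    have he : i + 1 - k = (i - k) + 1 := by omega
    rw [Matrix.mulVecLin_apply, Matrix.mulVec_mulVec, ← pow_succ', ← he]
  -- per-term bound
  have hterm : ∀ (s k : ℕ), s ≤ η →
      en (((Aᴴ)^s) *ᵥ (w k - zm k))^2 ≤ (2*M^2) * (en (w k)^2 + en (zm k)^2) := by
    intro s k hs
    have h1 : en (((Aᴴ)^s) *ᵥ (w k - zm k)) ≤ M * (en (w k) + en (zm k)) :=
      le_trans (en_pow_conjT_le A s _)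
        (mul_le_mul (hNM s hs) (en_sub_le _ _) (en_nonneg _) hM0)
    have h2 := pow_le_pow_left₀ (en_nonneg _) h1 2
    nlinarith [sq_nonneg (en (w k) - en (zm k)), sq_nonneg M, en_nonneg (w k), en_nonneg (zm k)]
  -- partial sums are below G
  have hzm_sum : ∀ j, ∑ k ∈ range (j+1), en (zm k)^2 = ∑ k ∈ range j, en (z k)^2 := by
    intro j
    rw [Finset.sum_range_succ' (fun k => en (zm k)^2) j]
    simp [hzmdef, en_zero]
  have hWsub : ∀ j, j < η → ∑ k ∈ range (j+1), (en (w k)^2 + en (zm k)^2) ≤ G := by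
    intro j hj
    rw [Finset.sum_add_distrib, hGdef]
    have h1 : ∑ k ∈ range (j+1), en (w k)^2 ≤ ∑ k ∈ range (η+1), en (w k)^2 :=
      Finset.sum_le_sum_of_subset_of_nonneg (Finset.range_subset_range.2 (by omega))
        (fun _ _ _ => sq_nonneg _)
    have h2 : ∑ k ∈ range (j+1), en (zm k)^2 ≤ ∑ i ∈ range η, en (z i)^2 := by
      rw [hzm_sum j]
      exact Finset.sum_le_sum_of_subset_of_nonneg (Finset.range_subset_range.2 (by omega))
        (fun _ _ _ => sq_nonneg _)
    linarith
  have hZsub : ∀ i, i < η →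
      en (z i)^2 + ∑ k ∈ range (i+1), (en (w k)^2 + en (zm k)^2) ≤ G := by
    intro i hi
    rw [Finset.sum_add_distrib, hGdef]
    have h1 : ∑ k ∈ range (i+1), en (w k)^2 ≤ ∑ k ∈ range (η+1), en (w k)^2 :=
      Finset.sum_le_sum_of_subset_of_nonneg (Finset.range_subset_range.2 (by omega))
        (fun _ _ _ => sq_nonneg _)
    have h2 : en (z i)^2 + ∑ k ∈ range (i+1), en (zm k)^2 ≤ ∑ i ∈ range η, en (z i)^2 := by
      rw [hzm_sum i, add_comm, ← Finset.sum_range_succ (fun k => en (z k)^2) i]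
      exact Finset.sum_le_sum_of_subset_of_nonneg (Finset.range_subset_range.2 (by omega))
        (fun _ _ _ => sq_nonneg _)
    linarith
  -- row bounds
  have hrowp : ∀ j, j < η → en (p j)^2 ≤ (2*(η:ℝ)*M^2) * G := by
    intro j hj
    have h1 : en (p j) ≤ ∑ k ∈ range (j+1), en (((Aᴴ)^(j-k)) *ᵥ (w k - zm k)) := by
      rw [CF j]; exact en_sum_le _
    have h2 := sum_sq_le (range (j+1)) (fun k => en (((Aᴴ)^(j-k)) *ᵥ (w k - zm k)))
      (fun _ => 2*M^2) (fun k => en (w k)^2 + en (zm k)^2)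
      (fun k _ => en_nonneg _) (fun k _ => by positivity)
      (fun k _ => add_nonneg (sq_nonneg _) (sq_nonneg _))
      (fun k hk => hterm (j-k) k (by omega))
    have h3 : en (p j)^2 ≤ (∑ _k ∈ range (j+1), 2*M^2) * (∑ k ∈ range (j+1), (en (w k)^2 + en (zm k)^2)) :=
      le_trans (pow_le_pow_left₀ (en_nonneg _) h1 2) h2
    have h4 : (∑ _k ∈ range (j+1), 2*M^2 : ℝ) = (j+1) * (2*M^2) := by
      rw [Finset.sum_const, Finset.card_range]; push_cast; ring
    rw [h4] at h3
    calc en (p j)^2 ≤ ((j+1) * (2*M^2)) * (∑ k ∈ range (j+1), (en (w k)^2 + en (zm k)^2)) := h3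
      _ ≤ ((η:ℝ) * (2*M^2)) * G := by
          apply mul_le_mul
          · apply mul_le_mul_of_nonneg_right _ (by positivity)
            exact_mod_cast Nat.cast_le.2 (by omega : j+1 ≤ η)
          · exact hWsub j hj
          · exact Finset.sum_nonneg fun k _ => add_nonneg (sq_nonneg _) (sq_nonneg _)
          · positivity
      _ = (2*(η:ℝ)*M^2) * G := by ring
  have hrowq : ∀ i, i < η → en (q i)^2 ≤ (1 + 2*(η:ℝ)*M^2) * G := by
    intro i hi
    have hq' : q i = z i - Aᴴ *ᵥ p i := by rw [hz i]; abel
    have h1 : en (q i) ≤ en (z i) + ∑ k ∈ range (i+1), en (((Aᴴ)^(i+1-k)) *ᵥ (w k - zm k)) := by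
      rw [hq']
      refine le_trans (en_sub_le _ _) ?_
      have := en_sum_le (s := range (i+1)) (fun k => ((Aᴴ)^(i+1-k)) *ᵥ (w k - zm k))
      rw [← CF2 i] at this
      linarith
    have hb2 := sum_sq_le (range (i+1)) (fun k => en (((Aᴴ)^(i+1-k)) *ᵥ (w k - zm k)))
      (fun _ => 2*M^2) (fun k => en (w k)^2 + en (zm k)^2)
      (fun k _ => en_nonneg _) (fun k _ => by positivity)
      (fun k _ => add_nonneg (sq_nonneg _) (sq_nonneg _))
      (fun k hk => hterm (i+1-k) k (by omega))
    have hcomb := combine (en (z i)) (∑ k ∈ range (i+1), en (((Aᴴ)^(i+1-k)) *ᵥ (w k - zm k)))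
      1 (∑ _k ∈ range (i+1), 2*M^2) (en (z i)^2) (∑ k ∈ range (i+1), (en (w k)^2 + en (zm k)^2))
      (en_nonneg _) (Finset.sum_nonneg fun k _ => en_nonneg _) zero_le_one
      (Finset.sum_nonneg fun k _ => by positivity) (sq_nonneg _)
      (Finset.sum_nonneg fun k _ => add_nonneg (sq_nonneg _) (sq_nonneg _))
      (by rw [one_mul]) hb2
    have h3 : en (q i)^2 ≤ (1 + ∑ _k ∈ range (i+1), 2*M^2) *
        (en (z i)^2 + ∑ k ∈ range (i+1), (en (w k)^2 + en (zm k)^2)) :=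
      le_trans (pow_le_pow_left₀ (en_nonneg _) h1 2) hcomb
    have h4 : (∑ _k ∈ range (i+1), 2*M^2 : ℝ) = (i+1) * (2*M^2) := by
      rw [Finset.sum_const, Finset.card_range]; push_cast; ring
    rw [h4] at h3
    calc en (q i)^2 ≤ (1 + (i+1)*(2*M^2)) *
        (en (z i)^2 + ∑ k ∈ range (i+1), (en (w k)^2 + en (zm k)^2)) := h3
      _ ≤ (1 + (η:ℝ)*(2*M^2)) * G := by
          apply mul_le_mul
          · have : ((i:ℝ)+1) ≤ (η:ℝ) := by exact_mod_cast Nat.cast_le.2 (by omega : i+1 ≤ η)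
            nlinarith [sq_nonneg M]
          · exact hZsub i hi
          · positivity
          · positivity
      _ = (1 + 2*(η:ℝ)*M^2) * G := by ring
  -- total
  have htot : ∑ j ∈ range η, (en (p j)^2 + en (q j)^2) ≤
      ((η:ℝ) * (1 + 4*(η:ℝ)*M^2)) * G := by
    calc ∑ j ∈ range η, (en (p j)^2 + en (q j)^2)
        ≤ ∑ _j ∈ range η, ((1 + 4*(η:ℝ)*M^2) * G) := by
          refine Finset.sum_le_sum fun j hj => ?_
          have h1 := hrowp j (Finset.mem_range.1 hj)
          have h2 := hrowq j (Finset.mem_range.1 hj)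
          nlinarith
      _ = ((η:ℝ) * (1 + 4*(η:ℝ)*M^2)) * G := by
          rw [Finset.sum_const, Finset.card_range]; push_cast; ring
  refine le_trans htot ?_
  apply mul_le_mul_of_nonneg_right _ hG0
  have hηR : (1:ℝ) ≤ (η:ℝ) := by exact_mod_cast hη
  nlinarith [sq_nonneg M, mul_nonneg (mul_nonneg (le_of_lt (by positivity : (0:ℝ) < (η:ℝ))) hM0) hM0]

lemma finsum_dite {η : ℕ} (t : ℕ) (F : Fin η → 𝕜) :
    (∑ i : Fin η, if t = (i:ℕ) then F i else 0) = if h : t < η then F ⟨t,h⟩ else 0 := by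
  by_cases h : t < η
  · rw [dif_pos h, Finset.sum_eq_single ⟨t,h⟩]
    · rw [if_pos rfl]
    · intro i _ hne
      rw [if_neg]
      intro e
      exact hne (Fin.ext e.symm)
    · intro hmem; exact absurd (Finset.mem_univ _) hmem
  · rw [dif_neg h]
    apply Finset.sum_eq_zero
    intro i _
    rw [if_neg]
    intro e
    exact h (e ▸ i.isLt)

lemma finsum_dite' {η : ℕ} (t : ℕ) (ht : t ≤ η) (F : Fin η → 𝕜) :
    (∑ i : Fin η, if t = (i:ℕ)+1 then F i else 0)
      = if h : 0 < t then F ⟨t-1, by omega⟩ else 0 := by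
  by_cases h : 0 < t
  · rw [dif_pos h, Finset.sum_eq_single (⟨t-1, by omega⟩ : Fin η)]
    · rw [if_pos (show t = (t-1)+1 by omega)]
    · intro i _ hne
      rw [if_neg]
      intro e
      exact hne (Fin.ext (show (i:ℕ) = t-1 by omega))
    · intro hmem; exact absurd (Finset.mem_univ _) hmem
  · rw [dif_neg h]
    apply Finset.sum_eq_zero
    intro i _
    rw [if_neg]
    omega

lemma gl {ℓ η m : ℕ} (A : Matrix (Fin ℓ) (Fin ℓ) 𝕜)
    (x : (Fin η × (Fin m × Fin ℓ)) ⊕ (Fin η × (Fin m × Fin ℓ)) → 𝕜)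
    (j : Fin (η+1)) (a : Fin m) (b : Fin ℓ) :
    ((Matrix.fromBlocks
        (Ek 𝕜 η ⊗ₖ (1 : Matrix (Fin m × Fin ℓ) (Fin m × Fin ℓ) 𝕜))
        ((1 : Matrix (Fin η) (Fin η) 𝕜) ⊗ₖ ((1 : Matrix (Fin m) (Fin m) 𝕜) ⊗ₖ A))
        (Fk 𝕜 η ⊗ₖ (1 : Matrix (Fin m × Fin ℓ) (Fin m × Fin ℓ) 𝕜))
        ((1 : Matrix (Fin η) (Fin η) 𝕜) ⊗ₖ
          ((1 : Matrix (Fin m) (Fin m) 𝕜) ⊗ₖ (1 : Matrix (Fin ℓ) (Fin ℓ) 𝕜))))ᴴ *ᵥ x)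
      (Sum.inl (j,(a,b)))
    = (if h : (j:ℕ) < η then x (Sum.inl (⟨(j:ℕ),h⟩,(a,b))) else 0)
      + (if h : 0 < (j:ℕ) then x (Sum.inr (⟨(j:ℕ)-1, by omega⟩,(a,b))) else 0) := by
  rw [← finsum_dite ((j:ℕ)) (fun i => x (Sum.inl (i,(a,b)))),
    ← finsum_dite' ((j:ℕ)) (by omega) (fun i => x (Sum.inr (i,(a,b))))]
  simp only [Matrix.mulVec, dotProduct, Matrix.conjTranspose_apply,
    Fintype.sum_sum_type, Fintype.sum_prod_type,
    Matrix.fromBlocks_apply₁₁, Matrix.fromBlocks_apply₂₁,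
    Matrix.kroneckerMap_apply, Matrix.one_apply, Ek, Fk, Matrix.of_apply,
    mul_ite, ite_mul, one_mul, mul_one, zero_mul, mul_zero, star_one, star_zero,
    mul_comm]
  simp only [ite_self, Prod.mk.injEq, ite_and, apply_ite (star : 𝕜 → 𝕜), star_one, star_zero,
    ite_mul, one_mul, zero_mul, Finset.sum_ite_irrel, Finset.sum_const_zero,
    Finset.sum_ite_eq, Finset.sum_ite_eq', Finset.mem_univ, if_true]

lemma gr {ℓ η m : ℕ} (A : Matrix (Fin ℓ) (Fin ℓ) 𝕜)
    (x : (Fin η × (Fin m × Fin ℓ)) ⊕ (Fin η × (Fin m × Fin ℓ)) → 𝕜)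
    (i : Fin η) (a : Fin m) (b : Fin ℓ) :
    ((Matrix.fromBlocks
        (Ek 𝕜 η ⊗ₖ (1 : Matrix (Fin m × Fin ℓ) (Fin m × Fin ℓ) 𝕜))
        ((1 : Matrix (Fin η) (Fin η) 𝕜) ⊗ₖ ((1 : Matrix (Fin m) (Fin m) 𝕜) ⊗ₖ A))
        (Fk 𝕜 η ⊗ₖ (1 : Matrix (Fin m × Fin ℓ) (Fin m × Fin ℓ) 𝕜))
        ((1 : Matrix (Fin η) (Fin η) 𝕜) ⊗ₖ
          ((1 : Matrix (Fin m) (Fin m) 𝕜) ⊗ₖ (1 : Matrix (Fin ℓ) (Fin ℓ) 𝕜))))ᴴ *ᵥ x)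
      (Sum.inr (i,(a,b)))
    = (Aᴴ *ᵥ (fun b' => x (Sum.inl (i,(a,b'))))) b + x (Sum.inr (i,(a,b))) := by
  simp only [Matrix.mulVec, dotProduct, Matrix.conjTranspose_apply,
    Fintype.sum_sum_type, Fintype.sum_prod_type,
    Matrix.fromBlocks_apply₁₂, Matrix.fromBlocks_apply₂₂,
    Matrix.kroneckerMap_apply, Matrix.one_apply, Matrix.of_apply,
    mul_ite, ite_mul, one_mul, mul_one, zero_mul, mul_zero, star_one, star_zero,
    ite_self, Prod.mk.injEq, ite_and, apply_ite (star : 𝕜 → 𝕜),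
    Finset.sum_ite_irrel, Finset.sum_const_zero,
    Finset.sum_ite_eq, Finset.sum_ite_eq', Finset.mem_univ, if_true]


end Stmt1Aux

end

/-- Lemma 3.2. Lower bound for the smallest singular value `ω₂` of the
block matrix `[[E_η⊗I_{mℓ}, I_{ηm}⊗A], [F_η⊗I_{mℓ}, I_{ηm}⊗I_ℓ]]`. -/
theorem statement1 {𝕜 : Type*} [RCLike 𝕜] (ℓ η m : ℕ) (hℓ : 0 < ℓ) (hη : 0 < η) (hm : 0 < m)
    (A : Matrix (Fin ℓ) (Fin ℓ) 𝕜) :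
    1 / (1 + 2 * (η : ℝ) * max 1 (specNorm A ^ η)) ≤
      sigmaMin (Matrix.fromBlocks
        (Ek 𝕜 η ⊗ₖ (1 : Matrix (Fin m × Fin ℓ) (Fin m × Fin ℓ) 𝕜))
        ((1 : Matrix (Fin η) (Fin η) 𝕜) ⊗ₖ ((1 : Matrix (Fin m) (Fin m) 𝕜) ⊗ₖ A))
        (Fk 𝕜 η ⊗ₖ (1 : Matrix (Fin m × Fin ℓ) (Fin m × Fin ℓ) 𝕜))
        ((1 : Matrix (Fin η) (Fin η) 𝕜) ⊗ₖ
          ((1 : Matrix (Fin m) (Fin m) 𝕜) ⊗ₖ (1 : Matrix (Fin ℓ) (Fin ℓ) 𝕜)))) := by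
  classical
  open Stmt1Aux in
  haveI hne1 : Nonempty (Fin ℓ) := ⟨⟨0,hℓ⟩⟩
  haveI hne2 : Nonempty (Fin η) := ⟨⟨0,hη⟩⟩
  haveI hne3 : Nonempty (Fin m) := ⟨⟨0,hm⟩⟩
  set M : ℝ := max 1 (specNorm A ^ η) with hMdef
  set C : ℝ := 1 + 2*(η:ℝ)*M with hCdef
  have hM1 : (1:ℝ) ≤ M := le_max_left _ _
  have hη0 : (0:ℝ) ≤ (η:ℝ) := Nat.cast_nonneg _
  have hC1 : (1:ℝ) ≤ C := by nlinarith
  have hC0 : (0:ℝ) < C := by linarith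
  set S := Matrix.fromBlocks
        (Ek 𝕜 η ⊗ₖ (1 : Matrix (Fin m × Fin ℓ) (Fin m × Fin ℓ) 𝕜))
        ((1 : Matrix (Fin η) (Fin η) 𝕜) ⊗ₖ ((1 : Matrix (Fin m) (Fin m) 𝕜) ⊗ₖ A))
        (Fk 𝕜 η ⊗ₖ (1 : Matrix (Fin m × Fin ℓ) (Fin m × Fin ℓ) 𝕜))
        ((1 : Matrix (Fin η) (Fin η) 𝕜) ⊗ₖ
          ((1 : Matrix (Fin m) (Fin m) 𝕜) ⊗ₖ (1 : Matrix (Fin ℓ) (Fin ℓ) 𝕜))) with hSdef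
  have key : ∀ x : (Fin η × (Fin m × Fin ℓ)) ⊕ (Fin η × (Fin m × Fin ℓ)) → 𝕜,
      (∑ r, ‖x r‖^2) ≤ C^2 * ∑ c, ‖(Sᴴ *ᵥ x) c‖^2 := by
    intro x
    set g : (Fin (η+1) × (Fin m × Fin ℓ)) ⊕ (Fin η × (Fin m × Fin ℓ)) → 𝕜 := Sᴴ *ᵥ x with hgdef
    have main : ∀ a : Fin m,
        ((∑ i : Fin η, ∑ b : Fin ℓ, ‖x (Sum.inl (i,(a,b)))‖^2)
          + (∑ i : Fin η, ∑ b : Fin ℓ, ‖x (Sum.inr (i,(a,b)))‖^2))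
        ≤ C^2 * ((∑ jj : Fin (η+1), ∑ b : Fin ℓ, ‖g (Sum.inl (jj,(a,b)))‖^2)
          + (∑ i : Fin η, ∑ b : Fin ℓ, ‖g (Sum.inr (i,(a,b)))‖^2)) := by
      intro a
      set P : ℕ → Fin ℓ → 𝕜 :=
        fun k b => if h : k < η then x (Sum.inl (⟨k,h⟩,(a,b))) else 0 with hP
      set Q : ℕ → Fin ℓ → 𝕜 :=
        fun k b => if h : k < η then x (Sum.inr (⟨k,h⟩,(a,b))) else 0 with hQ
      set W : ℕ → Fin ℓ → 𝕜 :=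
        fun k b => if h : k < η+1 then g (Sum.inl (⟨k,h⟩,(a,b))) else 0 with hW
      set Z : ℕ → Fin ℓ → 𝕜 :=
        fun k b => if h : k < η then g (Sum.inr (⟨k,h⟩,(a,b))) else 0 with hZ
      have hwrel : ∀ j, W j = P j + (if j = 0 then 0 else Q (j-1)) := by
        intro j
        funext b
        by_cases hj : j < η + 1
        · have hgb := gl (η := η) (m := m) (ℓ := ℓ) A x ⟨j,hj⟩ a b
          rw [← hSdef, ← hgdef] at hgb
          have hgb' : g (Sum.inl (⟨j,hj⟩,(a,b)))
              = (if h : j < η then x (Sum.inl (⟨j,h⟩,(a,b))) else 0)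
                + (if h : 0 < j then x (Sum.inr (⟨j-1, by omega⟩,(a,b))) else 0) := hgb
          have hWv : W j b = g (Sum.inl (⟨j,hj⟩,(a,b))) := by rw [hW]; simp only [dif_pos hj]
          rw [hWv, hgb']
          simp only [Pi.add_apply, hP, hQ, apply_ite (fun f : Fin ℓ → 𝕜 => f b), Pi.zero_apply]
          rcases Nat.eq_zero_or_pos j with h0 | h0
          · subst h0
            simp
          · rw [dif_pos h0, if_neg (by omega : ¬ j = 0), dif_pos (by omega : j - 1 < η)]
        · have h1 : W j b = 0 := by rw [hW]; simp only [dif_neg hj]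
          have h2 : P j b = 0 := by rw [hP]; simp only [dif_neg (by omega : ¬ j < η)]
          have h3 : Q (j-1) b = 0 := by rw [hQ]; simp only [dif_neg (by omega : ¬ j - 1 < η)]
          rw [h1]
          simp only [Pi.add_apply, h2, if_neg (by omega : ¬ j = 0), h3, add_zero]
      have hzrel : ∀ i, Z i = Aᴴ *ᵥ P i + Q i := by
        intro i
        by_cases hi : i < η
        · have hPe : P i = fun b' => x (Sum.inl (⟨i,hi⟩,(a,b'))) := by
            funext b'; rw [hP]; simp only [dif_pos hi]
          funext b
          have hgb := gr (η := η) (m := m) (ℓ := ℓ) A x ⟨i,hi⟩ a b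
          rw [← hSdef, ← hgdef] at hgb
          have hZv : Z i b = g (Sum.inr (⟨i,hi⟩,(a,b))) := by rw [hZ]; simp only [dif_pos hi]
          rw [hZv, hgb]
          simp only [Pi.add_apply, hPe]
          congr 1
          rw [hQ]; simp only [dif_pos hi]
        · have hPe : P i = 0 := by
            funext b'; rw [hP]; simp only [dif_neg hi, Pi.zero_apply]
          funext b
          have hZv : Z i b = 0 := by rw [hZ]; simp only [dif_neg hi]
          have hQv : Q i b = 0 := by rw [hQ]; simp only [dif_neg hi]
          rw [hZv]
          simp only [Pi.add_apply, hPe, Matrix.mulVec_zero, Pi.zero_apply, hQv, add_zero]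
      have coreineq := core hℓ hη A P Q W Z hwrel hzrel
      rw [Finset.sum_add_distrib] at coreineq
      have e1 : ∑ i : Fin η, ∑ b : Fin ℓ, ‖x (Sum.inl (i,(a,b)))‖^2
          = ∑ k ∈ Finset.range η, en (P k)^2 := by
        rw [← Fin.sum_univ_eq_sum_range (fun k => en (P k)^2) η]
        refine Finset.sum_congr rfl fun i _ => ?_
        rw [sq_en]
        refine Finset.sum_congr rfl fun b _ => ?_
        rw [hP]
        simp only [dif_pos i.isLt, Fin.eta]
      have e2 : ∑ i : Fin η, ∑ b : Fin ℓ, ‖x (Sum.inr (i,(a,b)))‖^2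
          = ∑ k ∈ Finset.range η, en (Q k)^2 := by
        rw [← Fin.sum_univ_eq_sum_range (fun k => en (Q k)^2) η]
        refine Finset.sum_congr rfl fun i _ => ?_
        rw [sq_en]
        refine Finset.sum_congr rfl fun b _ => ?_
        rw [hQ]
        simp only [dif_pos i.isLt, Fin.eta]
      have e3 : ∑ jj : Fin (η+1), ∑ b : Fin ℓ, ‖g (Sum.inl (jj,(a,b)))‖^2
          = ∑ k ∈ Finset.range (η+1), en (W k)^2 := by
        rw [← Fin.sum_univ_eq_sum_range (fun k => en (W k)^2) (η+1)]
        refine Finset.sum_congr rfl fun i _ => ?_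
        rw [sq_en]
        refine Finset.sum_congr rfl fun b _ => ?_
        rw [hW]
        simp only [dif_pos i.isLt, Fin.eta]
      have e4 : ∑ i : Fin η, ∑ b : Fin ℓ, ‖g (Sum.inr (i,(a,b)))‖^2
          = ∑ k ∈ Finset.range η, en (Z k)^2 := by
        rw [← Fin.sum_univ_eq_sum_range (fun k => en (Z k)^2) η]
        refine Finset.sum_congr rfl fun i _ => ?_
        rw [sq_en]
        refine Finset.sum_congr rfl fun b _ => ?_
        rw [hZ]
        simp only [dif_pos i.isLt, Fin.eta]
      rw [e1, e2, e3, e4]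
      calc ∑ k ∈ Finset.range η, en (P k)^2 + ∑ k ∈ Finset.range η, en (Q k)^2
          ≤ (1 + 2*(η:ℝ)*M)^2 *
            (∑ k ∈ Finset.range (η+1), en (W k)^2 + ∑ i ∈ Finset.range η, en (Z i)^2) :=
            coreineq
        _ = C^2 * (∑ k ∈ Finset.range (η+1), en (W k)^2 + ∑ i ∈ Finset.range η, en (Z i)^2) := by
            rw [hCdef]
    have swap : ∀ {n1 n2 : ℕ} (F : (Fin n1 × (Fin n2 × Fin ℓ)) → ℝ),
        ∑ t, F t = ∑ a : Fin n2, ∑ i : Fin n1, ∑ b : Fin ℓ, F (i,(a,b)) := by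
      intro n1 n2 F
      rw [Fintype.sum_prod_type]
      rw [show (∑ i : Fin n1, ∑ s : Fin n2 × Fin ℓ, F (i, s))
          = ∑ i : Fin n1, ∑ a : Fin n2, ∑ b : Fin ℓ, F (i,(a,b)) from
        Finset.sum_congr rfl fun i _ => Fintype.sum_prod_type _]
      exact Finset.sum_comm
    have etot1 : (∑ r, ‖x r‖^2)
        = ∑ a : Fin m, ((∑ i : Fin η, ∑ b : Fin ℓ, ‖x (Sum.inl (i,(a,b)))‖^2)
          + (∑ i : Fin η, ∑ b : Fin ℓ, ‖x (Sum.inr (i,(a,b)))‖^2)) := by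
      rw [Fintype.sum_sum_type, Finset.sum_add_distrib,
        swap (fun t => ‖x (Sum.inl t)‖^2), swap (fun t => ‖x (Sum.inr t)‖^2)]
    have etot2 : (∑ c, ‖g c‖^2)
        = ∑ a : Fin m, ((∑ jj : Fin (η+1), ∑ b : Fin ℓ, ‖g (Sum.inl (jj,(a,b)))‖^2)
          + (∑ i : Fin η, ∑ b : Fin ℓ, ‖g (Sum.inr (i,(a,b)))‖^2)) := by
      rw [Fintype.sum_sum_type, Finset.sum_add_distrib,
        swap (fun t => ‖g (Sum.inl t)‖^2), swap (fun t => ‖g (Sum.inr t)‖^2)]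
    calc (∑ r, ‖x r‖^2)
        = ∑ a : Fin m, ((∑ i : Fin η, ∑ b : Fin ℓ, ‖x (Sum.inl (i,(a,b)))‖^2)
          + (∑ i : Fin η, ∑ b : Fin ℓ, ‖x (Sum.inr (i,(a,b)))‖^2)) := etot1
      _ ≤ ∑ a : Fin m, C^2 * ((∑ jj : Fin (η+1), ∑ b : Fin ℓ, ‖g (Sum.inl (jj,(a,b)))‖^2)
          + (∑ i : Fin η, ∑ b : Fin ℓ, ‖g (Sum.inr (i,(a,b)))‖^2)) :=
            Finset.sum_le_sum fun a _ => main a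
      _ = C^2 * ∑ c, ‖g c‖^2 := by rw [← Finset.mul_sum, etot2]
  haveI : Nonempty ((Fin η × (Fin m × Fin ℓ)) ⊕ (Fin η × (Fin m × Fin ℓ))) :=
    ⟨Sum.inl (Classical.arbitrary _)⟩
  have heig : ∀ r, 1/C^2 ≤ (Matrix.isHermitian_mul_conjTranspose_self S).eigenvalues r := by
    intro r
    have hval : (Matrix.isHermitian_mul_conjTranspose_self S).eigenvalues r
        = ∑ c, ‖(Sᴴ *ᵥ ⇑((Matrix.isHermitian_mul_conjTranspose_self S).eigenvectorBasis r)) c‖^2 := by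
      rw [(Matrix.isHermitian_mul_conjTranspose_self S).eigenvalues_eq r]
      exact re_dot_eq S _
    have hunit : ∑ r', ‖(⇑((Matrix.isHermitian_mul_conjTranspose_self S).eigenvectorBasis r)) r'‖^2 = 1 := by
      have h1 : ‖(Matrix.isHermitian_mul_conjTranspose_self S).eigenvectorBasis r‖ = 1 :=
        (Matrix.isHermitian_mul_conjTranspose_self S).eigenvectorBasis.orthonormal.1 r
      rw [EuclideanSpace.norm_eq] at h1
      exact Real.sqrt_eq_one.mp h1
    have h2 := key (⇑((Matrix.isHermitian_mul_conjTranspose_self S).eigenvectorBasis r))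
    rw [hunit, ← hval] at h2
    rw [mul_comm] at h2
    exact (div_le_iff₀ (by positivity : (0:ℝ) < C^2)).mpr h2
  have hinf : 1/C^2 ≤ ⨅ r, (Matrix.isHermitian_mul_conjTranspose_self S).eigenvalues r :=
    le_ciInf heig
  have hfin : sigmaMin S = Real.sqrt (⨅ r, (Matrix.isHermitian_mul_conjTranspose_self S).eigenvalues r) := rfl
  rw [hfin]
  calc 1/C = Real.sqrt (1/C^2) := by
        rw [show 1/C^2 = (1/C)^2 by rw [div_pow, one_pow], Real.sqrt_sq (by positivity)]
    _ ≤ Real.sqrt (⨅ r, (Matrix.isHermitian_mul_conjTranspose_self S).eigenvalues r) :=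
        Real.sqrt_le_sqrt hinf
end
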